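/- arXiv:2502.00135 — 5 statements merged into one kernel-verified Lean document; each statement's English description precedes it below -/
import Mathlib

section
/- Let T be a tree with k ≥ 1 edges. Every properly edge-colored graph whose minimum degree is at least 2k contains a rainbow copy of T. Consequently, δ*(G, T) < 2k for every graph G. -/
open SimpleGraph

/-- An edge coloring is proper on `H` if distinct edges of `H` sharing a vertex
receive different colors. -/
def IsProperEdgeColoring {V : Type*} (H : SimpleGraph V) (c : Sym2 V → ℕ) : Prop :=
  ∀ ⦃e₁ : Sym2 V⦄, e₁ ∈ H.edgeSet → ∀ ⦃e₂ : Sym2 V⦄, e₂ ∈ H.edgeSet →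
    e₁ ≠ e₂ → (∃ v, v ∈ e₁ ∧ v ∈ e₂) → c e₁ ≠ c e₂

/-- The graph `H`, edge colored by `c`, contains a rainbow copy of `F`:
there is an (injective) copy of `F` in `H` all of whose edges receive
pairwise distinct colors. -/
def HasRainbowCopy {V W : Type*} (H : SimpleGraph V) (c : Sym2 V → ℕ)
    (F : SimpleGraph W) : Prop :=
  ∃ f : W ↪ V, (∀ ⦃a b : W⦄, F.Adj a b → H.Adj (f a) (f b)) ∧
    ∀ ⦃a b a' b' : W⦄, F.Adj a b → F.Adj a' b' → s(a, b) ≠ s(a', b') →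
      c s(f a, f b) ≠ c s(f a', f b')

/-- `H` admits a proper edge coloring with no rainbow copy of `F`. -/
def RainbowFree {V W : Type*} (H : SimpleGraph V) (F : SimpleGraph W) : Prop :=
  ∃ c : Sym2 V → ℕ, IsProperEdgeColoring H c ∧ ¬ HasRainbowCopy H c F

/-- The rainbow extremal number `ex*(G,F)`: the maximum number of edges of a
subgraph `H` of `G` admitting a proper edge coloring with no rainbow copy of `F`. -/
noncomputable def rainbowExtremalNumber {V W : Type*} [Fintype V]
    (G : SimpleGraph V) (F : SimpleGraph W) : ℕ :=
  sSup {m | ∃ H : SimpleGraph V, H ≤ G ∧ RainbowFree H F ∧ m = H.edgeSet.ncard}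

/-- The minimum degree of a subgraph, taken over its own vertex set. -/
noncomputable def subMinDegree {V : Type*} {G : SimpleGraph V} (H : G.Subgraph) : ℕ :=
  sInf {d | ∃ v ∈ H.verts, d = (H.neighborSet v).ncard}

/-- `δ*(G,F)`: the maximum of the minimum degree over all subgraphs `H` of `G`
admitting a proper edge coloring with no rainbow copy of `F`. -/
noncomputable def rainbowMinDegree {V W : Type*} [Fintype V]
    (G : SimpleGraph V) (F : SimpleGraph W) : ℕ :=
  sSup {m | ∃ H : G.Subgraph, RainbowFree H.spanningCoe F ∧ m = subMinDegree H}

/-- The `n`-dimensional hypercube graph `Q_n`. -/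
def cubeGraph (n : ℕ) : SimpleGraph (Fin n → Bool) where
  Adj x y := {i | x i ≠ y i}.ncard = 1
  symm := by
    constructor
    intro x y h
    have hs : {i | y i ≠ x i} = {i | x i ≠ y i} := by ext i; simp [ne_comm]
    rw [hs]; exact h
  loopless := by
    constructor
    intro x h
    simp at h

/-- The star `K_{1,k}` with `k` edges. -/
def starGraph (k : ℕ) : SimpleGraph (Fin (k + 1)) where
  Adj i j := i ≠ j ∧ (i = 0 ∨ j = 0)
  symm := by constructor; intro i j h; exact ⟨h.1.symm, h.2.symm⟩
  loopless := by constructor; intro i h; exact h.1 rfl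

/-- `G` contains a copy of `F` as a subgraph. -/
def ContainsCopy {V W : Type*} (G : SimpleGraph V) (F : SimpleGraph W) : Prop :=
  ∃ f : W ↪ V, ∀ ⦃a b : W⦄, F.Adj a b → G.Adj (f a) (f b)


lemma walk_cross {W : Type*} {T : SimpleGraph W} {S : Set W} :
    ∀ {u v : W}, T.Walk u v → u ∈ S → v ∉ S → ∃ a ∈ S, ∃ b, b ∉ S ∧ T.Adj a b := by
  intro u v p
  induction p with
  | nil => intro hu hv; exact absurd hu hv
  | @cons a b d h q ih =>
      intro hu hv
      by_cases hb : b ∈ S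
      · exact ih hb hv
      · exact ⟨a, hu, b, hb, h⟩

lemma tree_struct {W : Type*} [Fintype W] {T : SimpleGraph W} (hT : T.IsTree) {k : ℕ}
    (hk : 1 ≤ k) (hTk : T.edgeSet.ncard = k) :
    ∃ (w : Fin (k+1) → W) (p : Fin (k+1) → Fin (k+1)),
      Function.Bijective w ∧
      (∀ i, i ≠ 0 → p i < i ∧ T.Adj (w i) (w (p i))) ∧
      (∀ a b, T.Adj a b → ∃ i, i ≠ 0 ∧ s(a, b) = s(w i, w (p i))) := by
  classical
  have hconn := hT.isConnected
  haveI : Nonempty W := hconn.nonempty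
  have hcard : Fintype.card W = k + 1 := by
    have h1 : T.edgeFinset.card + 1 = Fintype.card W := hT.card_edgeFinset
    have h2 : T.edgeSet.ncard = T.edgeFinset.card := by
      have := Set.ncard_coe_finset T.edgeFinset; rwa [SimpleGraph.coe_edgeFinset] at this
    omega
  -- build the ordering
  have grow : ∀ n : ℕ, 1 ≤ n → n ≤ k + 1 → ∃ w : Fin (k+1) → W,
      (∀ i j : Fin (k+1), (i:ℕ) < n → (j:ℕ) < n → w i = w j → i = j) ∧
      (∀ i : Fin (k+1), i ≠ 0 → (i:ℕ) < n → ∃ j, j < i ∧ T.Adj (w i) (w j)) := by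
    intro n
    induction n with
    | zero => omega
    | succ n ih =>
        intro _ hn1
        by_cases hn0 : n = 0
        · subst hn0
          obtain ⟨w0⟩ := (inferInstance : Nonempty W)
          refine ⟨fun _ => w0, ?_, ?_⟩
          · intro i j hi hj _
            exact Fin.ext (by omega)
          · intro i hi0 hi
            have : (i:ℕ) = 0 := by omega
            exact absurd (Fin.ext (by simpa using this)) hi0
        · obtain ⟨w, hinj, hadj⟩ := ih (by omega) (by omega)
          have hnk : n < k + 1 := by omega
          set i₀ : Fin (k+1) := ⟨n, hnk⟩ with hi₀
          have hi₀v : (i₀:ℕ) = n := rfl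
          set S : Set W := w '' {i : Fin (k+1) | (i:ℕ) < n} with hS
          have hSne : S.Nonempty := ⟨w 0, ⟨0, by simpa using Nat.pos_of_ne_zero hn0, rfl⟩⟩
          have hScne : Sᶜ.Nonempty := by
            by_contra hc
            rw [Set.not_nonempty_iff_eq_empty, ← Set.compl_univ, compl_inj_iff] at hc
            have hseq : {i : Fin (k+1) | (i:ℕ) < n} = ↑(Finset.Iio i₀) := by
              ext m; simp [Fin.lt_def, hi₀v]
            have hscard : {i : Fin (k+1) | (i:ℕ) < n}.ncard = n := by
              rw [hseq, Set.ncard_coe_finset, Fin.card_Iio, hi₀v]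
            have hfin : S.ncard ≤ n := by
              rw [hS]
              refine le_trans (Set.ncard_image_le (Set.toFinite _)) (le_of_eq hscard)
            have : (Set.univ : Set W).ncard = k + 1 := by
              simp [Set.ncard_univ, Nat.card_eq_fintype_card, hcard]
            rw [hc] at hfin
            omega
          obtain ⟨a, haS, b, hbS, hab⟩ :=
            walk_cross ((hconn.preconnected hSne.choose hScne.choose).some)
              hSne.choose_spec hScne.choose_spec
          obtain ⟨j₀, hj₀n, hj₀⟩ := haS
          have hj₀n' : (j₀:ℕ) < n := hj₀n
          have hup : ∀ m : Fin (k+1), (m:ℕ) < n → Function.update w i₀ b m = w m := by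
            intro m hm
            have hne : m ≠ i₀ := by
              intro h; rw [h, hi₀v] at hm; omega
            exact Function.update_of_ne hne _ _
          refine ⟨Function.update w i₀ b, ?_, ?_⟩
          · intro i j hi hj heq
            rcases Nat.lt_or_ge (i:ℕ) n with hi' | hi'
            · rcases Nat.lt_or_ge (j:ℕ) n with hj' | hj'
              · exact hinj i j hi' hj' (by rwa [hup i hi', hup j hj'] at heq)
              · have hj'' : j = i₀ := Fin.ext (by omega)
                rw [hup i hi', hj'', Function.update_self] at heq
                exact absurd ⟨i, hi', heq⟩ hbS
            · have hi'' : i = i₀ := Fin.ext (by omega)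
              rcases Nat.lt_or_ge (j:ℕ) n with hj' | hj'
              · rw [hup j hj', hi'', Function.update_self] at heq
                exact absurd ⟨j, hj', heq.symm⟩ hbS
              · have hj'' : j = i₀ := Fin.ext (by omega)
                rw [hi'', hj'']
          · intro i hi0 hi
            rcases Nat.lt_or_ge (i:ℕ) n with hi' | hi'
            · obtain ⟨j, hji, hj⟩ := hadj i hi0 hi'
              have hj' : (j:ℕ) < n := lt_of_lt_of_le (Fin.lt_def.mp hji) (by omega)
              exact ⟨j, hji, by rwa [hup i hi', hup j hj']⟩
            · have hin : (i:ℕ) = n := by omega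
              refine ⟨j₀, Fin.lt_def.mpr (by omega), ?_⟩
              have hi'' : i = i₀ := Fin.ext (by omega)
              rw [hi'', Function.update_self, hup j₀ hj₀n', hj₀]
              exact hab.symm
  obtain ⟨w, hinj, hadj⟩ := grow (k+1) (by omega) le_rfl
  have hwinj : Function.Injective w := fun i j h => hinj i j i.isLt j.isLt h
  have hwbij : Function.Bijective w := by
    rw [Fintype.bijective_iff_injective_and_card]
    exact ⟨hwinj, by simp [hcard]⟩
  set p : Fin (k+1) → Fin (k+1) := fun i =>
    if h : i ≠ 0 then (hadj i h i.isLt).choose else 0 with hp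
  have hpar : ∀ i, i ≠ 0 → p i < i ∧ T.Adj (w i) (w (p i)) := by
    intro i hi
    have h1 := (hadj i hi i.isLt).choose_spec
    simp only [hp, dif_pos hi]
    exact ⟨h1.1, h1.2⟩
  refine ⟨w, p, hwbij, hpar, ?_⟩
  haveI : Fintype T.edgeSet := (Set.toFinite _).fintype
  have hE : Fintype.card T.edgeSet = k := by
    rw [← Nat.card_eq_fintype_card, Nat.card_coe_set_eq, hTk]
  set E : {i : Fin (k+1) // i ≠ 0} → T.edgeSet := fun i =>
    ⟨s(w i.1, w (p i.1)), T.mem_edgeSet.mpr (hpar i.1 i.2).2⟩ with hEdef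
  have hEinj : Function.Injective E := by
    rintro ⟨i, hi⟩ ⟨j, hj⟩ h
    simp only [hEdef, Subtype.mk.injEq, Sym2.eq, Sym2.rel_iff', Prod.mk.injEq,
      Prod.swap_prod_mk] at h
    rcases h with ⟨h1, h2⟩ | ⟨h1, h2⟩
    · exact Subtype.ext (hwinj h1)
    · have hij : i = p j := hwinj h1
      have hji : p i = j := hwinj h2
      exact absurd ((hpar j hj).1) (by rw [← hij, ← hji]; exact not_lt.mpr (le_of_lt (hpar i hi).1))
  have hEbij : Function.Bijective E := by
    rw [Fintype.bijective_iff_injective_and_card]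
    refine ⟨hEinj, ?_⟩
    rw [hE, Fintype.card_subtype_compl]
    simp
  intro a b hab
  obtain ⟨⟨i, hi⟩, hEi⟩ := hEbij.2 ⟨s(a, b), T.mem_edgeSet.mpr hab⟩
  refine ⟨i, hi, ?_⟩
  have := congrArg Subtype.val hEi
  simpa [hEdef] using this.symm

lemma main_embed {U W : Type*} [Fintype U] [Nonempty U] [Fintype W]
    (T : SimpleGraph W) (hT : T.IsTree) (k : ℕ) (hk : 1 ≤ k)
    (hTk : T.edgeSet.ncard = k)
    (H : SimpleGraph U) (c : Sym2 U → ℕ) (hpc : IsProperEdgeColoring H c)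
    (hd : ∀ u : U, 2 * k ≤ (H.neighborSet u).ncard) : HasRainbowCopy H c T := by
  classical
  obtain ⟨w, p, hwbij, hpar, hcover⟩ := tree_struct hT hk hTk
  have grow : ∀ n : ℕ, n ≤ k + 1 → ∃ f : Fin (k+1) → U,
      (∀ i j : Fin (k+1), (i:ℕ) < n → (j:ℕ) < n → f i = f j → i = j) ∧
      (∀ i : Fin (k+1), i ≠ 0 → (i:ℕ) < n → H.Adj (f i) (f (p i))) ∧
      (∀ i j : Fin (k+1), i ≠ 0 → (i:ℕ) < n → j ≠ 0 → (j:ℕ) < n → i ≠ j →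
        c s(f i, f (p i)) ≠ c s(f j, f (p j))) := by
    intro n
    induction n with
    | zero =>
        intro _
        exact ⟨fun _ => Classical.arbitrary U, by omega, by omega, by omega⟩
    | succ n ih =>
        intro hn1
        obtain ⟨f, hfinj, hfadj, hfcol⟩ := ih (by omega)
        by_cases hn0 : n = 0
        · subst hn0
          have hz : ∀ i : Fin (k+1), (i:ℕ) < 1 → i = 0 := by
            intro i hi; exact Fin.ext (by simpa using Nat.lt_one_iff.mp hi)
          refine ⟨f, ?_, ?_, ?_⟩
          · intro i j hi hj _; rw [hz i hi, hz j hj]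
          · intro i hi0 hi; exact absurd (hz i hi) hi0
          · intro i j hi0 hi _ _ _; exact absurd (hz i hi) hi0
        · -- n ≥ 1 : extend
          have hnk : n < k + 1 := by omega
          set i₀ : Fin (k+1) := ⟨n, hnk⟩ with hi₀
          have hi₀v : (i₀:ℕ) = n := rfl
          have hi₀0 : i₀ ≠ 0 := by
            intro h
            have := congrArg Fin.val h
            simp [hi₀v] at this
            omega
          have hpi₀ : (p i₀ : ℕ) < n := by
            have := (hpar i₀ hi₀0).1
            rw [Fin.lt_def, hi₀v] at this
            exact this
          set v : U := f (p i₀) with hv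
          set N : Finset U := (H.neighborSet v).toFinset with hN
          have hNcard : 2 * k ≤ N.card := by
            rw [hN, ← Set.ncard_eq_toFinset_card']
            exact hd v
          set Bad1 : Finset U := (Finset.Iio i₀).image f with hB1
          set Bad2 : Finset U := ((Finset.Iio i₀).erase 0).biUnion
            (fun j => N.filter (fun u => c s(v, u) = c s(f j, f (p j)))) with hB2
          have hB1card : Bad1.card ≤ n := by
            refine le_trans Finset.card_image_le ?_
            rw [Fin.card_Iio, hi₀v]
          have hB2card : Bad2.card ≤ n - 1 := by
            refine le_trans (Finset.card_biUnion_le_card_mul _ _ 1 ?_) ?_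
            · intro j hj
              rw [Finset.card_le_one]
              intro u1 hu1 u2 hu2
              simp only [Finset.mem_filter] at hu1 hu2
              by_contra hne
              have he1 : s(v, u1) ∈ H.edgeSet := by
                rw [mem_edgeSet]
                have := hu1.1
                rw [hN, Set.mem_toFinset] at this
                exact this
              have he2 : s(v, u2) ∈ H.edgeSet := by
                rw [mem_edgeSet]
                have := hu2.1
                rw [hN, Set.mem_toFinset] at this
                exact this
              have hee : s(v, u1) ≠ s(v, u2) :=
                fun h => hne (Sym2.congr_right.mp h)
              exact hpc he1 he2 hee ⟨v, Sym2.mem_mk_left _ _, Sym2.mem_mk_left _ _⟩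
                (hu1.2.trans hu2.2.symm)
            · have : ((Finset.Iio i₀).erase 0).card = n - 1 := by
                have h0 : (0 : Fin (k+1)) ∈ Finset.Iio i₀ := by
                  rw [Finset.mem_Iio, Fin.lt_def]
                  have hz : ((0 : Fin (k+1)) : ℕ) = 0 := rfl
                  omega
                rw [Finset.card_erase_of_mem h0, Fin.card_Iio, hi₀v]
              omega
          have hbig : (Bad1 ∪ Bad2).card < N.card := by
            have := Finset.card_union_le Bad1 Bad2
            omega
          have hex : ∃ u ∈ N, u ∉ Bad1 ∪ Bad2 := by
            by_contra hc
            push_neg at hc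
            have : N ⊆ Bad1 ∪ Bad2 := fun u hu => hc u hu
            exact absurd (Finset.card_le_card this) (not_le.mpr hbig)
          obtain ⟨u, huN, huB⟩ := hex
          have huB1 : u ∉ Bad1 := fun h => huB (Finset.mem_union_left _ h)
          have huB2 : u ∉ Bad2 := fun h => huB (Finset.mem_union_right _ h)
          have hadjvu : H.Adj v u := by rwa [hN, Set.mem_toFinset] at huN
          set f' : Fin (k+1) → U := Function.update f i₀ u with hf'
          have hup : ∀ m : Fin (k+1), (m:ℕ) < n → f' m = f m := by
            intro m hm
            refine Function.update_of_ne ?_ _ _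
            intro h; rw [h, hi₀v] at hm; omega
          have hupi₀ : f' i₀ = u := Function.update_self _ _ _
          have huppi₀ : f' (p i₀) = v := hup _ hpi₀
          refine ⟨f', ?_, ?_, ?_⟩
          · intro i j hi hj heq
            rcases Nat.lt_or_ge (i:ℕ) n with hi' | hi'
            · rcases Nat.lt_or_ge (j:ℕ) n with hj' | hj'
              · exact hfinj i j hi' hj' (by rwa [hup i hi', hup j hj'] at heq)
              · have hj'' : j = i₀ := Fin.ext (by omega)
                rw [hup i hi', hj'', hupi₀] at heq
                have himem : i ∈ Finset.Iio i₀ := by rw [Finset.mem_Iio, Fin.lt_def]; omega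
                exact absurd (Finset.mem_image.mpr ⟨i, himem, heq⟩) huB1
            · have hi'' : i = i₀ := Fin.ext (by omega)
              rcases Nat.lt_or_ge (j:ℕ) n with hj' | hj'
              · rw [hup j hj', hi'', hupi₀] at heq
                have hjmem : j ∈ Finset.Iio i₀ := by rw [Finset.mem_Iio, Fin.lt_def]; omega
                exact absurd (Finset.mem_image.mpr ⟨j, hjmem, heq.symm⟩) huB1
              · have hj'' : j = i₀ := Fin.ext (by omega)
                rw [hi'', hj'']
          · intro i hi0 hi
            rcases Nat.lt_or_ge (i:ℕ) n with hi' | hi'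
            · have hpi : (p i : ℕ) < n := lt_of_lt_of_le (Fin.lt_def.mp (hpar i hi0).1) (by omega)
              rw [hup i hi', hup _ hpi]
              exact hfadj i hi0 hi'
            · have hi'' : i = i₀ := Fin.ext (by omega)
              rw [hi'', hupi₀, huppi₀]
              exact hadjvu.symm
          · -- colors
            have key : ∀ j : Fin (k+1), j ≠ 0 → (j:ℕ) < n →
                c s(f' i₀, f' (p i₀)) ≠ c s(f' j, f' (p j)) := by
              intro j hj0 hj'
              have hpj : (p j : ℕ) < n := lt_of_lt_of_le (Fin.lt_def.mp (hpar j hj0).1) (by omega)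
              rw [hupi₀, huppi₀, hup j hj', hup _ hpj]
              intro hcol
              apply huB2
              refine Finset.mem_biUnion.mpr ⟨j, ?_, ?_⟩
              · rw [Finset.mem_erase]
                refine ⟨hj0, ?_⟩
                rw [Finset.mem_Iio, Fin.lt_def]
                omega
              · rw [Finset.mem_filter]
                refine ⟨huN, ?_⟩
                rw [← hcol, Sym2.eq_swap]
            intro i j hi0 hi hj0 hj hij
            rcases Nat.lt_or_ge (i:ℕ) n with hi' | hi'
            · rcases Nat.lt_or_ge (j:ℕ) n with hj' | hj'
              · have hpi : (p i : ℕ) < n :=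
                  lt_of_lt_of_le (Fin.lt_def.mp (hpar i hi0).1) (by omega)
                have hpj : (p j : ℕ) < n :=
                  lt_of_lt_of_le (Fin.lt_def.mp (hpar j hj0).1) (by omega)
                rw [hup i hi', hup _ hpi, hup j hj', hup _ hpj]
                exact hfcol i j hi0 hi' hj0 hj' hij
              · have hj'' : j = i₀ := Fin.ext (by omega)
                rw [hj'']
                exact (key i hi0 hi').symm
            · have hi'' : i = i₀ := Fin.ext (by omega)
              rcases Nat.lt_or_ge (j:ℕ) n with hj' | hj'
              · rw [hi'']
                exact key j hj0 hj'
              · exact absurd (Fin.ext (by omega) : i = j) hij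
  obtain ⟨f, hfinj, hfadj, hfcol⟩ := grow (k+1) le_rfl
  have hfinj' : Function.Injective f := fun i j h => hfinj i j i.isLt j.isLt h
  set e := Equiv.ofBijective w hwbij with he
  have hesymm : ∀ i, e.symm (w i) = i := fun i => e.symm_apply_apply i
  have hmap : ∀ (a b : W) (i : Fin (k+1)), s(a, b) = s(w i, w (p i)) →
      s(f (e.symm a), f (e.symm b)) = s(f i, f (p i)) := by
    intro a b i hsab
    have := congrArg (Sym2.map (fun x => f (e.symm x))) hsab
    simpa [Sym2.map_pair_eq, hesymm] using this
  refine ⟨⟨fun a => f (e.symm a), fun a b h => e.symm.injective (hfinj' h)⟩, ?_, ?_⟩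
  · intro a b hab
    obtain ⟨i, hi0, hs⟩ := hcover a b hab
    have h2 := hmap a b i hs
    show H.Adj (f (e.symm a)) (f (e.symm b))
    rw [← H.mem_edgeSet, h2, H.mem_edgeSet]
    exact hfadj i hi0 i.isLt
  · intro a b a' b' hab hab' hne
    obtain ⟨i, hi0, hs⟩ := hcover a b hab
    obtain ⟨i', hi0', hs'⟩ := hcover a' b' hab'
    have hii' : i ≠ i' := by
      intro h
      rw [h] at hs
      exact hne (hs.trans hs'.symm)
    show c s(f (e.symm a), f (e.symm b)) ≠ c s(f (e.symm a'), f (e.symm b'))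
    rw [hmap a b i hs, hmap a' b' i' hs']
    exact hfcol i i' hi0 i.isLt hi0' i'.isLt hii'

/-- Let `T` be a tree with `k ≥ 1` edges. Every properly edge-colored
graph with minimum degree at least `2k` contains a rainbow copy of `T`;
consequently `δ*(G,T) < 2k` for every graph `G`. -/
theorem stmt2 {U V W : Type*} [Fintype U] [Nonempty U] [Fintype V] [Fintype W]
    (T : SimpleGraph W) (hT : T.IsTree) (k : ℕ) (hk : 1 ≤ k)
    (hTk : T.edgeSet.ncard = k) (G : SimpleGraph V) :
    (∀ (H : SimpleGraph U) (c : Sym2 U → ℕ), IsProperEdgeColoring H c →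
      (∀ u : U, 2 * k ≤ (H.neighborSet u).ncard) → HasRainbowCopy H c T) ∧
    rainbowMinDegree G T < 2 * k := by
  constructor
  · intro H c hpc hdeg
    exact main_embed T hT k hk hTk H c hpc hdeg
  · classical
      rw [rainbowMinDegree]
      have hub : ∀ m ∈ {m | ∃ H : G.Subgraph, RainbowFree H.spanningCoe T ∧ m = subMinDegree H},
          m ≤ 2 * k - 1 := by
        rintro m ⟨H, ⟨c, hpc, hnr⟩, rfl⟩
        by_contra hgt
        push_neg at hgt
        -- every vertex of H has degree ≥ 2k
        have hD : ∀ v ∈ H.verts, 2 * k ≤ (H.neighborSet v).ncard := by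
          intro v hv
          have hmem : (H.neighborSet v).ncard ∈
              {d | ∃ v ∈ H.verts, d = (H.neighborSet v).ncard} := ⟨v, hv, rfl⟩
          have := Nat.sInf_le hmem
          rw [subMinDegree] at hgt
          omega
        have hvne : H.verts.Nonempty := by
          by_contra hc
          rw [Set.not_nonempty_iff_eq_empty] at hc
          have : {d | ∃ v ∈ H.verts, d = (H.neighborSet v).ncard} = ∅ := by
            ext d; simp [hc]
          rw [subMinDegree, this, Nat.sInf_empty] at hgt
          omega
        haveI : Nonempty H.verts := hvne.to_subtype
        haveI : Fintype H.verts := Fintype.ofFinite _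
        -- restrict the coloring to the coe graph
        set c' : Sym2 H.verts → ℕ := fun e => c (Sym2.map Subtype.val e) with hc'
        have hpc' : IsProperEdgeColoring H.coe c' := by
          intro e₁ he₁ e₂ he₂ hne hshare
          have hmem : ∀ e : Sym2 H.verts, e ∈ H.coe.edgeSet →
              Sym2.map Subtype.val e ∈ H.spanningCoe.edgeSet := by
            intro e he
            induction e with
            | _ a b =>
                rw [Sym2.map_pair_eq, mem_edgeSet]
                exact (mem_edgeSet _).mp he
          have hne' : Sym2.map Subtype.val e₁ ≠ Sym2.map Subtype.val e₂ :=
            fun h => hne (Sym2.map.injective Subtype.val_injective h)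
          obtain ⟨x, hx1, hx2⟩ := hshare
          exact hpc (hmem e₁ he₁) (hmem e₂ he₂) hne'
            ⟨x, Sym2.mem_map.mpr ⟨x, hx1, rfl⟩, Sym2.mem_map.mpr ⟨x, hx2, rfl⟩⟩
        have hdeg : ∀ u : H.verts, 2 * k ≤ (H.coe.neighborSet u).ncard := by
          intro u
          have himg : Subtype.val '' (H.coe.neighborSet u) = H.neighborSet u.1 := by
            ext x
            simp only [Set.mem_image, SimpleGraph.mem_neighborSet, Subgraph.coe_adj]
            constructor
            · rintro ⟨y, hy, rfl⟩; exact hy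
            · intro hx; exact ⟨⟨x, hx.snd_mem⟩, hx, rfl⟩
          have := Set.ncard_image_of_injective (H.coe.neighborSet u) Subtype.val_injective
          rw [himg] at this
          rw [← this]
          exact hD u.1 u.2
        obtain ⟨g, hg1, hg2⟩ := main_embed T hT k hk hTk H.coe c' hpc' hdeg
        apply hnr
        refine ⟨g.trans (Function.Embedding.subtype _), ?_, ?_⟩
        · intro a b hab
          simp only [Function.Embedding.trans_apply, Function.Embedding.coe_subtype]
          exact hg1 hab
        · intro a b a' b' hab hab' hne
          simp only [Function.Embedding.trans_apply, Function.Embedding.coe_subtype]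
          have e1 : c s(((g a) : V), ((g b) : V)) = c' s(g a, g b) := by
            simp only [hc', Sym2.map_pair_eq]
          have e2 : c s(((g a') : V), ((g b') : V)) = c' s(g a', g b') := by
            simp only [hc', Sym2.map_pair_eq]
          rw [e1, e2]
          exact hg2 hab hab' hne
      calc sSup _ ≤ 2 * k - 1 := csSup_le' hub
        _ < 2 * k := by omega
end

section
/- Let p ≥ 2 be an integer, let k = 2^p - 1, and let n be a positive integer divisible by k+1. Then δ*(K_n, P_k) ≥ k; that is, K_n contains a spanning subgraph H with minimum degree k together with a proper edge coloring of H containing no rainbow path with k edges. -/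
open SimpleGraph

namespace Stmt4Aux

/-- Disjoint union of cliques: blocks of size `m` given by integer division. -/
def blockGraph (n m : ℕ) : SimpleGraph (Fin n) where
  Adj x y := x ≠ y ∧ x.val / m = y.val / m
  symm := ⟨fun _ _ h => ⟨h.1.symm, h.2.symm⟩⟩
  loopless := ⟨fun _ h => h.1 rfl⟩

lemma blockGraph_adj {n m : ℕ} {x y : Fin n} :
    (blockGraph n m).Adj x y ↔ x ≠ y ∧ x.val / m = y.val / m := Iff.rfl

/-- The coloring: color of an edge is the xor of the residues of its endpoints. -/
def col (n m : ℕ) : Sym2 (Fin n) → ℕ :=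
  Sym2.lift ⟨fun x y => (x.val % m) ^^^ (y.val % m), fun _ _ => Nat.xor_comm _ _⟩

lemma col_mk (n m : ℕ) (x y : Fin n) :
    col n m s(x, y) = (x.val % m) ^^^ (y.val % m) := rfl

lemma fin_eq_of {n m : ℕ} {x y : Fin n} (hm : 0 < m)
    (hd : x.val / m = y.val / m) (hr : x.val % m = y.val % m) : x = y := by
  apply Fin.ext
  conv_lhs => rw [← Nat.div_add_mod x.val m]
  rw [hd, hr, Nat.div_add_mod]

def phi (p x : ℕ) : Fin p → ZMod 2 := fun j => if x.testBit j then 1 else 0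

lemma phi_xor (p x y : ℕ) : phi p (x ^^^ y) = phi p x + phi p y := by
  funext j
  simp only [phi, Nat.testBit_xor, Pi.add_apply]
  cases hx : x.testBit j <;> cases hy : y.testBit j <;> simp <;> decide

lemma phi_zero (p : ℕ) : phi p 0 = 0 := by
  funext j; simp [phi]

lemma phi_inj {p x y : ℕ} (hx : x < 2 ^ p) (hy : y < 2 ^ p) (h : phi p x = phi p y) :
    x = y := by
  apply Nat.eq_of_testBit_eq
  intro j
  by_cases hj : j < p
  · have := congrFun h ⟨j, hj⟩
    simp only [phi] at this
    cases h1 : x.testBit j <;> cases h2 : y.testBit j <;> simp [h1, h2] at this ⊢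
  · rw [Nat.testBit_eq_false_of_lt
        (lt_of_lt_of_le hx (Nat.pow_le_pow_right (by norm_num) (le_of_not_gt hj))),
      Nat.testBit_eq_false_of_lt
        (lt_of_lt_of_le hy (Nat.pow_le_pow_right (by norm_num) (le_of_not_gt hj)))]

lemma sum_univ_zmod (p : ℕ) (hp : 2 ≤ p) : ∑ y : Fin p → ZMod 2, y = 0 := by
  funext j
  rw [Finset.sum_apply]
  have h0 : (0 : ℕ) < p := by omega
  have h1 : (1 : ℕ) < p := by omega
  set j' : Fin p := if j = ⟨0, h0⟩ then ⟨1, h1⟩ else ⟨0, h0⟩ with hj'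
  have hne : j' ≠ j := by
    by_cases h : j = ⟨0, h0⟩
    · simp only [hj', if_pos h, h]
      intro hc
      exact absurd (congrArg Fin.val hc) (by simp)
    · simp only [hj', if_neg h]
      exact fun hc => h hc.symm
  refine Finset.sum_ninvolution (fun y => Function.update y j' (y j' + 1)) ?_ ?_
    (fun _ => Finset.mem_univ _) ?_
  · intro y
    show y j + (Function.update y j' (y j' + 1)) j = 0
    rw [Function.update_of_ne (Ne.symm hne)]
    exact CharTwo.add_self_eq_zero _
  · intro y _
    intro hc
    have := congrFun hc j'
    simp only [Function.update_self] at this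
    have h' : y j' + 1 = y j' + 0 := by rw [add_zero]; exact this
    exact absurd (add_left_cancel h') (by decide)
  · intro y
    funext i
    by_cases hi : i = j'
    · subst hi
      simp only [Function.update_idem, Function.update_self]
      rw [add_assoc, CharTwo.add_self_eq_zero, add_zero]
    · simp [Function.update_of_ne hi]

lemma telescope {G : Type*} [AddCommGroup G] (h2 : ∀ x : G, x + x = 0) (h : ℕ → G) :
    ∀ t, ∑ i ∈ Finset.range t, (h i + h (i + 1)) = h 0 + h t := by
  intro t
  induction t with
  | zero => simp [(h2 (h 0)).symm]
  | succ t ih =>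
    rw [Finset.sum_range_succ, ih]
    have : h 0 + h t + (h t + h (t + 1)) = h 0 + h (t + 1) + (h t + h t) := by abel
    rw [this, h2, add_zero]

lemma xor_lt_two_pow {x y q : ℕ} (hx : x < 2 ^ q) (hy : y < 2 ^ q) : x ^^^ y < 2 ^ q :=
  Nat.xor_lt_two_pow hx hy

lemma key {n m : ℕ} (hm : 0 < m) {v x y : Fin n} (hx : (blockGraph n m).Adj v x)
    (hy : (blockGraph n m).Adj v y) (hxy : x ≠ y) :
    col n m s(v, x) ≠ col n m s(v, y) := by
  rw [col_mk, col_mk]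
  intro h
  have hmod : x.val % m = y.val % m := by
    have h2 := congrArg (fun t => (v.val % m) ^^^ t) h
    simpa [xor_cancel_left] using h2
  exact hxy (fin_eq_of hm (hx.2.symm.trans hy.2) hmod)

lemma proper (n m : ℕ) (hm : 0 < m) :
    IsProperEdgeColoring (blockGraph n m) (col n m) := by
  intro e₁ he₁ e₂ he₂ hne hshare
  induction e₁ using Sym2.inductionOn with
  | hf a b =>
  induction e₂ using Sym2.inductionOn with
  | hf a' b' =>
  obtain ⟨v, hv1, hv2⟩ := hshare
  rw [Sym2.mem_iff] at hv1 hv2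
  rw [SimpleGraph.mem_edgeSet] at he₁ he₂
  obtain ⟨x, hx, hxadj⟩ : ∃ x, s(a, b) = s(v, x) ∧ (blockGraph n m).Adj v x := by
    rcases hv1 with h | h
    · refine ⟨b, ?_, ?_⟩
      · rw [h]
      · rw [h]; exact he₁
    · refine ⟨a, ?_, ?_⟩
      · rw [h]; exact Sym2.eq_swap
      · rw [h]; exact he₁.symm
  obtain ⟨y, hy, hyadj⟩ : ∃ y, s(a', b') = s(v, y) ∧ (blockGraph n m).Adj v y := by
    rcases hv2 with h | h
    · refine ⟨b', ?_, ?_⟩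
      · rw [h]
      · rw [h]; exact he₂
    · refine ⟨a', ?_, ?_⟩
      · rw [h]; exact Sym2.eq_swap
      · rw [h]; exact he₂.symm
  rw [hx, hy] at hne ⊢
  exact key hm hxadj hyadj (fun h => hne (by rw [h]))

lemma ncard_nbr {n m : ℕ} (hm : 0 < m) (hdvd : m ∣ n) (v : Fin n) :
    ((blockGraph n m).neighborSet v).ncard = m - 1 := by
  classical
  obtain ⟨t, rfl⟩ := hdvd
  set b := v.val / m with hb
  have hbt : b < t := by
    rw [hb]
    rw [Nat.div_lt_iff_lt_mul hm]
    have h1 := v.isLt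
    have h2 : t * m = m * t := Nat.mul_comm t m
    omega
  have hlt : ∀ j : Fin m, m * b + j.val < m * t := by
    intro j
    have hj := j.isLt
    have : m * b + j.val < m * (b + 1) := by
      rw [Nat.mul_add, Nat.mul_one]
      omega
    exact lt_of_lt_of_le this (Nat.mul_le_mul_left m hbt)
  set e : Fin m → Fin (m * t) := fun j => ⟨m * b + j.val, hlt j⟩ with he
  have hinj : Function.Injective e := by
    intro j1 j2 h
    have := congrArg Fin.val h
    simp only [he] at this
    exact Fin.ext (by omega)
  have hrange : Set.range e = {w : Fin (m * t) | w.val / m = b} := by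
    ext w
    constructor
    · rintro ⟨j, rfl⟩
      show (m * b + j.val) / m = b
      rw [Nat.mul_add_div hm]
      simp [Nat.div_eq_of_lt j.isLt]
    · intro hw
      refine ⟨⟨w.val % m, Nat.mod_lt _ hm⟩, ?_⟩
      apply Fin.ext
      show m * b + w.val % m = w.val
      have h1 : m * (w.val / m) + w.val % m = w.val := Nat.div_add_mod w.val m
      rw [← hw]
      exact h1
  have hnbr : (blockGraph (m * t) m).neighborSet v
      = {w : Fin (m * t) | w.val / m = b} \ {v} := by
    ext w
    simp only [SimpleGraph.mem_neighborSet, blockGraph_adj, Set.mem_diff,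
      Set.mem_setOf_eq, Set.mem_singleton_iff]
    constructor
    · rintro ⟨h1, h2⟩
      exact ⟨h2.symm, fun h => h1 (h.symm)⟩
    · rintro ⟨h1, h2⟩
      exact ⟨fun h => h2 (h.symm), h1.symm⟩
  rw [hnbr, ← hrange]
  have hmem : v ∈ Set.range e := by
    rw [hrange]; exact rfl
  have hfin : (Set.range e).Finite := Set.toFinite _
  rw [Set.ncard_diff_singleton_of_mem hmem]
  have : (Set.range e).ncard = m := by
    rw [← Set.image_univ, Set.ncard_image_of_injective _ hinj, Set.ncard_univ,
      Nat.card_eq_fintype_card, Fintype.card_fin]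
  rw [this]

lemma path_adj {k : ℕ} (i : Fin k) :
    (pathGraph (k + 1)).Adj i.castSucc i.succ := by
  rw [pathGraph_adj]
  left
  simp

lemma no_rainbow (p n : ℕ) (hp : 2 ≤ p) (hdvd : 2 ^ p ∣ n) :
    ¬ HasRainbowCopy (blockGraph n (2 ^ p)) (col n (2 ^ p))
      (pathGraph (2 ^ p - 1 + 1)) := by
  set m := 2 ^ p with hmdef
  have hm4 : 4 ≤ m := by
    calc (4 : ℕ) = 2 ^ 2 := by norm_num
    _ ≤ 2 ^ p := Nat.pow_le_pow_right (by norm_num) hp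
  have hm0 : 0 < m := by omega
  set k := m - 1 with hkdef
  have hk1 : k + 1 = m := by omega
  rintro ⟨f, hadj, hrb⟩
  -- all vertices in the same block
  have hblock : ∀ i : Fin (k + 1), (f i).val / m = (f ⟨0, by omega⟩).val / m := by
    have : ∀ j : ℕ, ∀ hj : j < k + 1, (f ⟨j, hj⟩).val / m = (f ⟨0, by omega⟩).val / m := by
      intro j
      induction j with
      | zero => intro hj; rfl
      | succ j ih =>
        intro hj
        have hj' : j < k := by omega
        have hadj' := hadj (path_adj (⟨j, hj'⟩ : Fin k))
        have h1 : (f (⟨j, hj'⟩ : Fin k).castSucc).val / m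
            = (f (⟨j, hj'⟩ : Fin k).succ).val / m := hadj'.2
        have hc : (⟨j, hj'⟩ : Fin k).castSucc = ⟨j, by omega⟩ := rfl
        have hs : (⟨j, hj'⟩ : Fin k).succ = ⟨j + 1, hj⟩ := rfl
        rw [hc, hs] at h1
        rw [← h1]
        exact ih (by omega)
    intro i
    exact this i.val i.isLt
  -- the sequence of colors along the path
  set D : Fin k → ℕ := fun i =>
    ((f i.castSucc).val % m) ^^^ ((f i.succ).val % m) with hD
  have hDcol : ∀ i : Fin k, D i = col n m s(f i.castSucc, f i.succ) := fun i => rfl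
  have hD_inj : Function.Injective D := by
    intro i j hij
    by_contra hne
    have hedge : s(i.castSucc, i.succ) ≠ s(j.castSucc, j.succ) := by
      intro h
      rw [Sym2.eq_iff] at h
      rcases h with ⟨h1, _⟩ | ⟨h1, h2⟩
      · exact hne (Fin.castSucc_injective _ h1)
      · have e1 := congrArg Fin.val h1
        have e2 := congrArg Fin.val h2
        simp [Fin.val_succ] at e1 e2
        omega
    exact hrb (path_adj i) (path_adj j) hedge (by rw [← hDcol, ← hDcol, hij])
  have hD_lt : ∀ i : Fin k, D i < m :=
    fun i => xor_lt_two_pow (Nat.mod_lt _ hm0) (Nat.mod_lt _ hm0)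
  have hD_ne : ∀ i : Fin k, D i ≠ 0 := by
    intro i h
    rw [hD] at h
    have hr := xor_eq_zero_iff.mp h
    have : f i.castSucc = f i.succ :=
      fin_eq_of hm0 ((hblock i.castSucc).trans (hblock i.succ).symm) hr
    have := f.injective this
    have := congrArg Fin.val this
    simp [Fin.val_succ] at this
  -- the colors are exactly all nonzero residues
  have himg : Finset.image D Finset.univ = Finset.Ioo 0 m := by
    apply Finset.eq_of_subset_of_card_le
    · intro x hx
      simp only [Finset.mem_image] at hx
      obtain ⟨i, _, rfl⟩ := hx
      exact Finset.mem_Ioo.mpr ⟨Nat.pos_of_ne_zero (hD_ne i), hD_lt i⟩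
    · rw [Nat.card_Ioo, Finset.card_image_of_injective _ hD_inj, Finset.card_univ,
        Fintype.card_fin]
      omega
  -- sum of phi over the colors is 0
  have hchar : ∀ x : Fin p → ZMod 2, x + x = 0 :=
    fun x => funext fun j => CharTwo.add_self_eq_zero _
  have hS0 : ∑ i : Fin k, phi p (D i) = 0 := by
    have h1 : ∑ i : Fin k, phi p (D i) = ∑ x ∈ Finset.Ioo 0 m, phi p x := by
      rw [← himg, Finset.sum_image (fun a _ b _ h => hD_inj h)]
    have h2 : Finset.range m = insert 0 (Finset.Ioo 0 m) := by
      rw [Finset.range_eq_Ico, Finset.Ioo_insert_left hm0]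
    have h3 : ∑ x ∈ Finset.Ioo 0 m, phi p x = ∑ x ∈ Finset.range m, phi p x := by
      rw [h2, Finset.sum_insert (by simp), phi_zero, zero_add]
    have hphiinj : ∀ a ∈ Finset.range m, ∀ b ∈ Finset.range m,
        phi p a = phi p b → a = b := by
      intro a ha b hb h
      exact phi_inj (Finset.mem_range.mp ha) (Finset.mem_range.mp hb) h
    have himg2 : (Finset.range m).image (phi p) = Finset.univ := by
      apply Finset.eq_of_subset_of_card_le (Finset.subset_univ _)
      rw [Finset.card_image_of_injOn hphiinj, Finset.card_range, Finset.card_univ]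
      have : Fintype.card (Fin p → ZMod 2) = 2 ^ p := by
        rw [Fintype.card_fun]
        simp [ZMod.card]
      rw [this]
    have h4 : ∑ x ∈ Finset.range m, phi p x = ∑ y : Fin p → ZMod 2, y := by
      rw [← himg2, Finset.sum_image hphiinj]
    rw [h1, h3, h4, sum_univ_zmod p hp]
  -- telescoping
  set g : ℕ → (Fin p → ZMod 2) :=
    fun i => phi p ((f ⟨min i k, by omega⟩).val % m) with hg
  have hgen : ∀ (j : ℕ) (hj : j < k + 1), g j = phi p ((f ⟨j, hj⟩).val % m) := by
    intro j hj
    have he : (⟨min j k, by omega⟩ : Fin (k + 1)) = ⟨j, hj⟩ := Fin.ext (by simp; omega)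
    simp only [hg, he]
  have hterm : ∀ i : Fin k, phi p (D i) = g i.val + g (i.val + 1) := by
    intro i
    have hlt1 : i.val < k + 1 := by omega
    have hlt2 : i.val + 1 < k + 1 := by omega
    rw [hgen i.val hlt1, hgen (i.val + 1) hlt2]
    have e1 : (⟨i.val, hlt1⟩ : Fin (k + 1)) = i.castSucc := Fin.ext (by simp)
    have e2 : (⟨i.val + 1, hlt2⟩ : Fin (k + 1)) = i.succ := Fin.ext (by simp)
    rw [e1, e2, hD]
    exact phi_xor p _ _
  have htel : ∑ i : Fin k, phi p (D i) = g 0 + g k := by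
    have := telescope hchar g k
    rw [← this]
    rw [← Fin.sum_univ_eq_sum_range (fun i => g i + g (i + 1)) k]
    exact Finset.sum_congr rfl (fun i _ => hterm i)
  have heq : g 0 + g k = 0 := by rw [← htel, hS0]
  have hgk : g k = g 0 := by
    have h' : g 0 + (g 0 + g k) = g 0 + 0 := by rw [heq]
    rw [← add_assoc, hchar, zero_add, add_zero] at h'
    exact h'
  -- conclude
  have h0k : (f ⟨0, by omega⟩ : Fin n).val % m = (f ⟨k, by omega⟩ : Fin n).val % m := by
    have hg0 : g 0 = phi p ((f ⟨0, by omega⟩).val % m) := hgen 0 (by omega)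
    have hgk' : g k = phi p ((f ⟨k, by omega⟩).val % m) := hgen k (by omega)
    apply phi_inj (Nat.mod_lt _ hm0) (Nat.mod_lt _ hm0)
    rw [← hg0, ← hgk', hgk]
  have hfeq : (f ⟨0, by omega⟩ : Fin n) = f ⟨k, by omega⟩ :=
    fin_eq_of hm0 ((hblock ⟨0, by omega⟩).trans (hblock ⟨k, by omega⟩).symm) h0k
  have := f.injective hfeq
  have := congrArg Fin.val this
  simp at this
  omega

end Stmt4Aux

open Stmt4Aux

/-- For `p ≥ 2`, `k = 2^p - 1` and `n > 0` divisible by `k+1`, we have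
`δ*(K_n, P_k) ≥ k`; that is, `K_n` has a spanning subgraph with minimum degree `k`
admitting a proper edge coloring with no rainbow path with `k` edges. -/
theorem stmt4 (p n k : ℕ) (hp : 2 ≤ p) (hk : k = 2 ^ p - 1) (hn : 0 < n)
    (hdvd : (k + 1) ∣ n) :
    k ≤ rainbowMinDegree (⊤ : SimpleGraph (Fin n)) (SimpleGraph.pathGraph (k + 1)) ∧
    ∃ H : SimpleGraph (Fin n),
      sInf {d | ∃ v : Fin n, d = (H.neighborSet v).ncard} = k ∧
      RainbowFree H (SimpleGraph.pathGraph (k + 1)) := by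
  have hm4 : 4 ≤ 2 ^ p := by
    calc (4 : ℕ) = 2 ^ 2 := by norm_num
    _ ≤ 2 ^ p := Nat.pow_le_pow_right (by norm_num) hp
  set m := 2 ^ p with hmdef
  have hk1 : k + 1 = m := by omega
  have hm0 : 0 < m := by omega
  have hdvd' : m ∣ n := hk1 ▸ hdvd
  have hkm : k = m - 1 := by omega
  -- the rainbow-free structure
  have hrf : RainbowFree (blockGraph n m) (SimpleGraph.pathGraph (k + 1)) := by
    refine ⟨col n m, proper n m hm0, ?_⟩
    have := no_rainbow p n hp hdvd'
    have hkk : 2 ^ p - 1 + 1 = k + 1 := by omega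
    rwa [← hmdef, hkk] at this
  -- the degree set
  have hset : {d | ∃ v : Fin n, d = ((blockGraph n m).neighborSet v).ncard} = {k} := by
    ext d
    simp only [Set.mem_setOf_eq, Set.mem_singleton_iff]
    constructor
    · rintro ⟨v, rfl⟩
      rw [ncard_nbr hm0 hdvd' v]
      omega
    · rintro rfl
      exact ⟨⟨0, hn⟩, by rw [ncard_nbr hm0 hdvd']; omega⟩
  constructor
  · -- rainbowMinDegree bound
    set H' : (⊤ : SimpleGraph (Fin n)).Subgraph :=
      SimpleGraph.toSubgraph (blockGraph n m) le_top with hH'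
    have hspan : H'.spanningCoe = blockGraph n m := by
      ext x y
      rfl
    have hsub : subMinDegree H' = k := by
      unfold subMinDegree
      have : {d | ∃ v ∈ H'.verts, d = (H'.neighborSet v).ncard}
          = {d | ∃ v : Fin n, d = ((blockGraph n m).neighborSet v).ncard} := by
        ext d
        simp only [Set.mem_setOf_eq, hH', SimpleGraph.toSubgraph, Set.mem_univ, true_and]
        rfl
      rw [this, hset]
      exact csInf_singleton k
    have hmem : k ∈ {d | ∃ H : (⊤ : SimpleGraph (Fin n)).Subgraph,
        RainbowFree H.spanningCoe (SimpleGraph.pathGraph (k + 1)) ∧ d = subMinDegree H} :=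
      ⟨H', by rw [hspan]; exact hrf, hsub.symm⟩
    have hbdd : ∀ x ∈ {d | ∃ H : (⊤ : SimpleGraph (Fin n)).Subgraph,
        RainbowFree H.spanningCoe (SimpleGraph.pathGraph (k + 1)) ∧ d = subMinDegree H},
        x ≤ n := by
      rintro x ⟨H'', _, rfl⟩
      unfold subMinDegree
      rcases Set.eq_empty_or_nonempty
        {d | ∃ v ∈ H''.verts, d = (H''.neighborSet v).ncard} with h | h
      · rw [h]
        simp [Nat.sInf_empty]
      · obtain ⟨d, v, hv, rfl⟩ := h
        refine le_trans (Nat.sInf_le ⟨v, hv, rfl⟩) ?_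
        calc (H''.neighborSet v).ncard ≤ (Set.univ : Set (Fin n)).ncard :=
              Set.ncard_le_ncard (Set.subset_univ _) Set.finite_univ
        _ = n := by simp [Set.ncard_univ]
    exact le_csSup ⟨n, hbdd⟩ hmem
  · exact ⟨blockGraph n m, by rw [hset]; exact csInf_singleton k, hrf⟩
end

section
/- For every n ≥ 2, the rainbow extremal number of the 3-edge path in the n-dimensional hypercube satisfies ex*(Q_n, P_3) = 2^n. -/
open SimpleGraph

section Aux
open Finset

lemma cube_adj {n : ℕ} {x y : Fin n → Bool} :
    (cubeGraph n).Adj x y ↔ ∃ i, ∀ j, x j ≠ y j ↔ j = i := by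
  show {i | x i ≠ y i}.ncard = 1 ↔ _
  rw [Set.ncard_eq_one]
  constructor
  · rintro ⟨i, hi⟩
    exact ⟨i, fun j => by rw [← Set.mem_singleton_iff, ← hi]; rfl⟩
  · rintro ⟨i, hi⟩
    exact ⟨i, Set.ext fun j => (hi j).trans (Set.mem_singleton_iff).symm⟩

lemma cube_tf {n : ℕ} {x y z : Fin n → Bool} (h1 : (cubeGraph n).Adj x y)
    (h2 : (cubeGraph n).Adj y z) (h3 : (cubeGraph n).Adj x z) : False := by
  rw [cube_adj] at h1 h2 h3
  obtain ⟨i, hi⟩ := h1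
  obtain ⟨j, hj⟩ := h2
  obtain ⟨k, hk⟩ := h3
  by_cases hij : i = j
  · subst hij
    have : x = z := by
      funext l
      by_cases hl : l = i
      · subst hl
        have a1 : x l ≠ y l := (hi l).mpr rfl
        have a2 : y l ≠ z l := (hj l).mpr rfl
        revert a1 a2
        cases x l <;> cases y l <;> cases z l <;> simp
      · have a1 : x l = y l := by_contra fun h => hl ((hi l).mp h)
        have a2 : y l = z l := by_contra fun h => hl ((hj l).mp h)
        rw [a1, a2]
    subst this
    exact ((hk k).mpr rfl) rfl
  · have hxzi : x i ≠ z i := by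
      have a1 : x i ≠ y i := (hi i).mpr rfl
      have a2 : y i = z i := by_contra fun h => hij ((hj i).mp h)
      rw [← a2]; exact a1
    have hxzj : x j ≠ z j := by
      have a1 : x j = y j := by_contra fun h => hij ((hi j).mp h).symm
      have a2 : y j ≠ z j := (hj j).mpr rfl
      rw [a1]; exact a2
    have e1 : i = k := (hk i).mp hxzi
    have e2 : j = k := (hk j).mp hxzj
    exact hij (e1.trans e2.symm)


/-- The subgraph of the cube using only directions `0` and `1`. -/
def lowH (n : ℕ) (hn : 2 ≤ n) : SimpleGraph (Fin n → Bool) where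
  Adj x y := (∀ j, x j ≠ y j ↔ j = ⟨0, by omega⟩) ∨ (∀ j, x j ≠ y j ↔ j = ⟨1, by omega⟩)
  symm := by
    constructor
    intro x y h
    rcases h with h | h
    · exact Or.inl fun j => (ne_comm.trans (h j))
    · exact Or.inr fun j => (ne_comm.trans (h j))
  loopless := by
    constructor
    intro x h
    rcases h with h | h
    · exact (h ⟨0, by omega⟩).mpr rfl rfl
    · exact (h ⟨1, by omega⟩).mpr rfl rfl

lemma lowH_le (n : ℕ) (hn : 2 ≤ n) : lowH n hn ≤ cubeGraph n := by
  intro x y h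
  rcases h with h | h
  · exact cube_adj.mpr ⟨_, h⟩
  · exact cube_adj.mpr ⟨_, h⟩

lemma dir_eq {n : ℕ} {x y : Fin n → Bool} {i : Fin n}
    (h : ∀ j, x j ≠ y j ↔ j = i) : y = Function.update x i (!x i) := by
  funext j
  by_cases hj : j = i
  · subst hj
    have := (h j).mpr rfl
    rw [Function.update_self]
    revert this
    cases x j <;> cases y j <;> simp
  · rw [Function.update_of_ne hj]
    by_contra hne
    exact hj ((h j).mp (Ne.symm hne))

lemma lowH_unique {n : ℕ} (hn : 2 ≤ n) {v a b : Fin n → Bool} {i : Fin n}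
    (ha : ∀ j, v j ≠ a j ↔ j = i) (hb : ∀ j, v j ≠ b j ↔ j = i) : a = b := by
  rw [dir_eq ha, dir_eq hb]

/-- The coloring by direction: an edge gets color 0 if it changes coordinate 0. -/
def lowC (n : ℕ) (hn : 2 ≤ n) : Sym2 (Fin n → Bool) → ℕ :=
  Sym2.lift ⟨fun x y => if x ⟨0, by omega⟩ = y ⟨0, by omega⟩ then 1 else 0, by
    intro x y
    simp only [eq_comm]⟩

lemma mem_edge {V : Type*} {H : SimpleGraph V} {e : Sym2 V} (he : e ∈ H.edgeSet) {v : V}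
    (hv : v ∈ e) : ∃ a, H.Adj v a ∧ e = s(v, a) := by
  induction e with
  | _ p q =>
    rw [Sym2.mem_iff] at hv
    rcases hv with rfl | rfl
    · exact ⟨q, he, rfl⟩
    · exact ⟨p, ((SimpleGraph.mem_edgeSet _).mp he).symm, Sym2.eq_swap⟩

lemma i0_ne_i1 {n : ℕ} (hn : 2 ≤ n) : (⟨0, by omega⟩ : Fin n) ≠ ⟨1, by omega⟩ := by
  intro h
  simpa using congrArg Fin.val h

lemma lowC_dir0 {n : ℕ} (hn : 2 ≤ n) {v a : Fin n → Bool}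
    (h : ∀ j, v j ≠ a j ↔ j = ⟨0, by omega⟩) : lowC n hn s(v, a) = 0 := by
  have := (h ⟨0, by omega⟩).mpr rfl
  simp only [lowC, Sym2.lift_mk]
  rw [if_neg this]

lemma lowC_dir1 {n : ℕ} (hn : 2 ≤ n) {v a : Fin n → Bool}
    (h : ∀ j, v j ≠ a j ↔ j = ⟨1, by omega⟩) : lowC n hn s(v, a) = 1 := by
  have h0 : v ⟨0, by omega⟩ = a ⟨0, by omega⟩ := by
    by_contra hne
    exact i0_ne_i1 hn ((h _).mp hne)
  simp only [lowC, Sym2.lift_mk]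
  rw [if_pos h0]

lemma lowC_mem {n : ℕ} (hn : 2 ≤ n) (e : Sym2 (Fin n → Bool)) :
    lowC n hn e = 0 ∨ lowC n hn e = 1 := by
  induction e with
  | _ p q =>
    simp only [lowC, Sym2.lift_mk]
    split <;> simp

lemma lowC_proper {n : ℕ} (hn : 2 ≤ n) : IsProperEdgeColoring (lowH n hn) (lowC n hn) := by
  intro e1 he1 e2 he2 hne hshare hceq
  obtain ⟨v, hv1, hv2⟩ := hshare
  obtain ⟨a, hva, rfl⟩ := mem_edge he1 hv1
  obtain ⟨b, hvb, rfl⟩ := mem_edge he2 hv2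
  rcases hva with ha | ha <;> rcases hvb with hb | hb
  · exact hne (by rw [lowH_unique hn ha hb])
  · rw [lowC_dir0 hn ha, lowC_dir1 hn hb] at hceq; omega
  · rw [lowC_dir1 hn ha, lowC_dir0 hn hb] at hceq; omega
  · exact hne (by rw [lowH_unique hn ha hb])

lemma lowH_degree {n : ℕ} (hn : 2 ≤ n) [DecidableRel (lowH n hn).Adj] (v : Fin n → Bool) :
    (lowH n hn).degree v = 2 := by
  classical
  set i0 : Fin n := ⟨0, by omega⟩
  set i1 : Fin n := ⟨1, by omega⟩
  have hN : (lowH n hn).neighborFinset v =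
      {Function.update v i0 (!v i0), Function.update v i1 (!v i1)} := by
    ext u
    rw [SimpleGraph.mem_neighborFinset, Finset.mem_insert, Finset.mem_singleton]
    constructor
    · rintro (h | h)
      · exact Or.inl (dir_eq h)
      · exact Or.inr (dir_eq h)
    · have key : ∀ i : Fin n, ∀ j, v j ≠ Function.update v i (!v i) j ↔ j = i := by
        intro i j
        by_cases hj : j = i
        · subst hj
          rw [Function.update_self]
          simp [Bool.eq_not_iff]
        · rw [Function.update_of_ne hj]
          simp [hj]
      rintro (rfl | rfl)
      · exact Or.inl (key i0)
      · exact Or.inr (key i1)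
  rw [← SimpleGraph.card_neighborFinset_eq_degree, hN]
  rw [Finset.card_insert_of_notMem, Finset.card_singleton]
  rw [Finset.mem_singleton]
  intro h
  have := congrFun h i0
  rw [Function.update_self, Function.update_of_ne (i0_ne_i1 hn)] at this
  exact (Bool.not_ne_self (v i0)) this

lemma lowH_card {n : ℕ} (hn : 2 ≤ n) : (lowH n hn).edgeSet.ncard = 2 ^ n := by
  classical
  have hV : Fintype.card (Fin n → Bool) = 2 ^ n := by
    simp [Fintype.card_fun]
  have h2 : ∑ v : Fin n → Bool, (lowH n hn).degree v = 2 * (lowH n hn).edgeFinset.card :=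
    SimpleGraph.sum_degrees_eq_twice_card_edges _
  have h3 : ∑ v : Fin n → Bool, (lowH n hn).degree v = 2 * 2 ^ n := by
    rw [Finset.sum_congr rfl (fun v _ => lowH_degree hn v)]
    rw [Finset.sum_const, smul_eq_mul, Finset.card_univ, hV, mul_comm]
  have hE : (lowH n hn).edgeSet.ncard = (lowH n hn).edgeFinset.card := by
    rw [← SimpleGraph.coe_edgeFinset, Set.ncard_coe_finset]
  omega

lemma lowC_norainbow {n : ℕ} (hn : 2 ≤ n) :
    ¬ HasRainbowCopy (lowH n hn) (lowC n hn) (pathGraph 4) := by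
  rintro ⟨f, hadj, hrb⟩
  have h01 : (pathGraph 4).Adj 0 1 := pathGraph_adj.mpr (Or.inl rfl)
  have h12 : (pathGraph 4).Adj 1 2 := pathGraph_adj.mpr (Or.inl rfl)
  have h23 : (pathGraph 4).Adj 2 3 := pathGraph_adj.mpr (Or.inl rfl)
  have d1 := hrb h01 h12 (by decide)
  have d2 := hrb h12 h23 (by decide)
  have d3 := hrb h01 h23 (by decide)
  have m1 := lowC_mem hn s(f 0, f 1)
  have m2 := lowC_mem hn s(f 1, f 2)
  have m3 := lowC_mem hn s(f 2, f 3)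
  omega


lemma no_rb_path {V : Type*} {H : SimpleGraph V} {c : Sym2 V → ℕ}
    (hc : IsProperEdgeColoring H c) (hno : ¬ HasRainbowCopy H c (pathGraph 4))
    {x a v y : V} (hxa : H.Adj x a) (hav : H.Adj a v) (hvy : H.Adj v y)
    (hxv : x ≠ v) (hxy : x ≠ y) (hay : a ≠ y) :
    c s(x, a) = c s(v, y) := by
  by_contra hne
  have hxa' : x ≠ a := hxa.ne
  have hav' : a ≠ v := hav.ne
  have hvy' : v ≠ y := hvy.ne
  have h12 : c s(x, a) ≠ c s(a, v) := by
    apply hc (H.mem_edgeSet.mpr hxa) (H.mem_edgeSet.mpr hav)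
    · intro h
      rw [Sym2.eq_iff] at h
      rcases h with ⟨h1, _⟩ | ⟨h1, _⟩
      · exact hxa' h1
      · exact hxv h1
    · exact ⟨a, by simp, by simp⟩
  have h23 : c s(a, v) ≠ c s(v, y) := by
    apply hc (H.mem_edgeSet.mpr hav) (H.mem_edgeSet.mpr hvy)
    · intro h
      rw [Sym2.eq_iff] at h
      rcases h with ⟨h1, _⟩ | ⟨h1, _⟩
      · exact hav' h1
      · exact hay h1
    · exact ⟨v, by simp, by simp⟩
  apply hno
  refine ⟨⟨![x, a, v, y], ?_⟩, ?_, ?_⟩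
  · intro i j hij
    fin_cases i <;> fin_cases j <;> simp_all [Matrix.cons_val_zero, Matrix.cons_val_one] <;>
      first
        | rfl
        | (exact absurd hij.symm hxa') | (exact absurd hij hxa')
        | (exact absurd hij.symm hxv) | (exact absurd hij hxv)
        | (exact absurd hij.symm hxy) | (exact absurd hij hxy)
        | (exact absurd hij.symm hav') | (exact absurd hij hav')
        | (exact absurd hij.symm hay) | (exact absurd hij hay)
        | (exact absurd hij.symm hvy') | (exact absurd hij hvy')
  · intro i j hij
    fin_cases i <;> fin_cases j <;>
      simp only [pathGraph_adj, Fin.isValue] at hij <;>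
      simp_all <;>
      first
        | exact hxa | exact hxa.symm
        | exact hav | exact hav.symm
        | exact hvy | exact hvy.symm
  · intro i j k l hij hkl hne'
    change c s(![x, a, v, y] i, ![x, a, v, y] j) ≠ c s(![x, a, v, y] k, ![x, a, v, y] l)
    have sxa : s(a, x) = s(x, a) := Sym2.eq_swap
    have sav : s(v, a) = s(a, v) := Sym2.eq_swap
    have svy : s(y, v) = s(v, y) := Sym2.eq_swap
    fin_cases i <;> fin_cases j <;> fin_cases k <;> fin_cases l <;>
      simp only [pathGraph_adj, Fin.isValue] at hij hkl <;>
      first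
        | omega
        | (exfalso; revert hne'; decide)
        | ((try simp only [Function.Embedding.coeFn_mk])
           (try simp only [Fin.reduceFinMk, Matrix.cons_val_zero, Matrix.cons_val_one,
             Matrix.head_cons, Matrix.cons_val_two, Matrix.tail_cons, Matrix.cons_val_three]) <;>
           (try simp only [sxa, sav, svy]) <;>
           first
             | exact h12 | exact Ne.symm h12
             | exact h23 | exact Ne.symm h23
             | exact hne | exact Ne.symm hne)


lemma count_lemma {V : Type*} [Fintype V] [DecidableEq V] (H : SimpleGraph V)
    [DecidableRel H.Adj]
    (hP : ∀ v a, H.Adj v a → 3 ≤ H.degree v → ∀ x, H.Adj a x → x = v) :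
    H.edgeFinset.card ≤ Fintype.card V := by
  classical
  set S : Finset V := Finset.univ.filter (fun v => 3 ≤ H.degree v) with hS
  set L : Finset V := S.biUnion (fun v => H.neighborFinset v) with hL
  -- every vertex of L has degree one
  have hLdeg : ∀ u ∈ L, H.degree u = 1 := by
    intro u hu
    rw [hL, Finset.mem_biUnion] at hu
    obtain ⟨v, hvS, hvu⟩ := hu
    rw [Finset.mem_filter] at hvS
    rw [SimpleGraph.mem_neighborFinset] at hvu
    have h1 : H.neighborFinset u = {v} := by
      ext x
      simp only [SimpleGraph.mem_neighborFinset, Finset.mem_singleton]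
      constructor
      · intro hx; exact hP v u hvu hvS.2 x hx
      · rintro rfl; exact hvu.symm
    rw [← SimpleGraph.card_neighborFinset_eq_degree, h1, Finset.card_singleton]
  have hLS : Disjoint L S := by
    rw [Finset.disjoint_left]
    intro u hu huS
    rw [hS, Finset.mem_filter] at huS
    have := hLdeg u hu
    omega
  have hLcard : L.card = ∑ v ∈ S, H.degree v := by
    rw [hL, Finset.card_biUnion]
    · simp [SimpleGraph.card_neighborFinset_eq_degree]
    · intro v hv w hw hvw
      rw [Function.onFun, Finset.disjoint_left]
      intro u huv huw
      rw [SimpleGraph.mem_neighborFinset] at huv huw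
      rw [Finset.mem_coe, Finset.mem_filter] at hv
      exact hvw (hP v u huv hv.2 w huw.symm).symm
  -- main count
  have hsub : L ⊆ Finset.univ \ S := by
    intro u hu
    rw [Finset.mem_sdiff]
    exact ⟨Finset.mem_univ u, Finset.disjoint_left.mp hLS hu⟩
  have hsum : ∑ v, H.degree v = ∑ v ∈ S, H.degree v + ∑ v ∈ Finset.univ \ S, H.degree v := by
    rw [add_comm, Finset.sum_sdiff (Finset.subset_univ S)]
  have hsplit : ∑ v ∈ Finset.univ \ S, H.degree v
      = ∑ v ∈ L, H.degree v + ∑ v ∈ (Finset.univ \ S) \ L, H.degree v := by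
    rw [add_comm, Finset.sum_sdiff hsub]
  have hLsum : ∑ v ∈ L, H.degree v = L.card := by
    rw [Finset.card_eq_sum_ones]
    exact Finset.sum_congr rfl hLdeg
  have hrest : ∑ v ∈ (Finset.univ \ S) \ L, H.degree v ≤ 2 * ((Finset.univ \ S) \ L).card := by
    calc ∑ v ∈ (Finset.univ \ S) \ L, H.degree v ≤ ∑ _v ∈ (Finset.univ \ S) \ L, 2 := by
          apply Finset.sum_le_sum
          intro v hv
          rw [Finset.mem_sdiff, Finset.mem_sdiff, hS, Finset.mem_filter] at hv
          have := hv.1.2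
          simp only [Finset.mem_univ, true_and] at this
          omega
      _ = 2 * ((Finset.univ \ S) \ L).card := by rw [Finset.sum_const, smul_eq_mul, mul_comm]
  have hcards : L.card + ((Finset.univ \ S) \ L).card = (Finset.univ \ S).card := by
    have := Finset.card_sdiff_add_card_eq_card hsub
    omega
  have h2e : 2 * H.edgeFinset.card = ∑ v, H.degree v := (H.sum_degrees_eq_twice_card_edges).symm
  have hfin : (Finset.univ \ S).card ≤ Fintype.card V := by
    calc (Finset.univ \ S).card ≤ Finset.univ.card := Finset.card_le_card (Finset.sdiff_subset)
      _ = Fintype.card V := Finset.card_univ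
  omega

end Aux

/-- For every `n ≥ 2`, `ex*(Q_n, P_3) = 2^n`. -/
theorem stmt5 (n : ℕ) (hn : 2 ≤ n) :
    rainbowExtremalNumber (cubeGraph n) (SimpleGraph.pathGraph 4) = 2 ^ n := by
  classical
  have hVcard : Fintype.card (Fin n → Bool) = 2 ^ n := by simp [Fintype.card_fun]
  have hub : ∀ m ∈ {m | ∃ H : SimpleGraph (Fin n → Bool), H ≤ cubeGraph n ∧
      RainbowFree H (SimpleGraph.pathGraph 4) ∧ m = H.edgeSet.ncard}, m ≤ 2 ^ n := by
    rintro m ⟨H, hle, ⟨c, hc, hno⟩, rfl⟩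
    have hP : ∀ v a, H.Adj v a → 3 ≤ H.degree v → ∀ x, H.Adj a x → x = v := by
      intro v a hva hdeg x hax
      by_contra hxv
      have hvx : ¬ H.Adj v x := fun h => cube_tf (hle hva) (hle hax) (hle h)
      have haa : a ∈ H.neighborFinset v := (SimpleGraph.mem_neighborFinset _ _ _).mpr hva
      have hcard : 1 < ((H.neighborFinset v).erase a).card := by
        rw [Finset.card_erase_of_mem haa]
        rw [H.card_neighborFinset_eq_degree v]
        omega
      obtain ⟨y, hy, z, hz, hyz⟩ := Finset.one_lt_card.mp hcard
      rw [Finset.mem_erase, SimpleGraph.mem_neighborFinset] at hy hz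
      have e1 : c s(x, a) = c s(v, y) :=
        no_rb_path hc hno hax.symm hva.symm hy.2 hxv
          (fun h => hvx (h ▸ hy.2)) (Ne.symm hy.1)
      have e2 : c s(x, a) = c s(v, z) :=
        no_rb_path hc hno hax.symm hva.symm hz.2 hxv
          (fun h => hvx (h ▸ hz.2)) (Ne.symm hz.1)
      have hedne : s(v, y) ≠ s(v, z) := by
        intro h
        rw [Sym2.eq_iff] at h
        rcases h with ⟨-, h2⟩ | ⟨h1, -⟩
        · exact hyz h2
        · exact hz.2.ne h1
      exact hc ((SimpleGraph.mem_edgeSet _).mpr hy.2) ((SimpleGraph.mem_edgeSet _).mpr hz.2)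
        hedne ⟨v, by simp, by simp⟩ (e1.symm.trans e2)
    calc H.edgeSet.ncard = H.edgeFinset.card := by rw [← SimpleGraph.coe_edgeFinset, Set.ncard_coe_finset]
      _ ≤ Fintype.card (Fin n → Bool) := count_lemma H hP
      _ = 2 ^ n := hVcard
  have hmem : (2 : ℕ) ^ n ∈ {m | ∃ H : SimpleGraph (Fin n → Bool), H ≤ cubeGraph n ∧
      RainbowFree H (SimpleGraph.pathGraph 4) ∧ m = H.edgeSet.ncard} :=
    ⟨lowH n hn, lowH_le n hn, ⟨lowC n hn, lowC_proper hn, lowC_norainbow hn⟩,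
      (lowH_card hn).symm⟩
  apply le_antisymm
  · exact csSup_le ⟨2 ^ n, hmem⟩ hub
  · exact le_csSup ⟨2 ^ n, hub⟩ hmem
end

section
/- Let T be a tree with k edges having a vertex x_0 adjacent to ℓ leaves of T, where 4ℓ > 3k. Then for every n ≥ k-1, ex*(Q_n, T) = (k-1)·2^{n-1}. -/
open SimpleGraph
open Finset
open scoped Classical

section CubeBasics
variable {n : ℕ}

lemma cube_adj_iff (x y : Fin n → Bool) :
    (cubeGraph n).Adj x y ↔ (Finset.univ.filter fun i => x i ≠ y i).card = 1 := by
  classical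
  show ({i | x i ≠ y i}).ncard = 1 ↔ _
  rw [Set.ncard_eq_toFinset_card', Set.toFinset_setOf]

def flipC (x : Fin n → Bool) (i : Fin n) : Fin n → Bool := Function.update x i (!x i)

lemma flipC_apply_self (x : Fin n → Bool) (i : Fin n) : flipC x i i = !x i := by
  simp [flipC]

lemma flipC_apply_ne (x : Fin n → Bool) {i j : Fin n} (h : j ≠ i) : flipC x i j = x j := by
  simp [flipC, Function.update_of_ne h]

lemma diffs_flipC (x : Fin n → Bool) (i : Fin n) :
    (Finset.univ.filter fun j => x j ≠ flipC x i j) = {i} := by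
  classical
  ext j
  simp only [Finset.mem_filter, Finset.mem_univ, true_and, Finset.mem_singleton]
  constructor
  · intro h
    by_contra hj
    exact h (flipC_apply_ne x hj).symm
  · intro h
    subst h
    rw [flipC_apply_self]
    cases x j <;> simp

lemma cube_adj_flipC (x : Fin n → Bool) (i : Fin n) : (cubeGraph n).Adj x (flipC x i) := by
  rw [cube_adj_iff, diffs_flipC]; simp

lemma cube_adj_iff_exists (x y : Fin n → Bool) :
    (cubeGraph n).Adj x y ↔ ∃ i, y = flipC x i := by
  classical
  rw [cube_adj_iff]
  constructor
  · intro h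
    obtain ⟨i, hi⟩ := Finset.card_eq_one.mp h
    refine ⟨i, funext fun j => ?_⟩
    by_cases hj : j = i
    · subst hj
      have : x j ≠ y j := by
        have : j ∈ Finset.univ.filter fun m => x m ≠ y m := hi ▸ Finset.mem_singleton_self j
        simpa using this
      rw [flipC_apply_self]
      exact Bool.eq_not_iff.mpr this.symm
    · have : ¬ (x j ≠ y j) := by
        intro hne
        have : j ∈ ({i} : Finset (Fin n)) := by
          rw [← hi]; simpa using hne
        exact hj (Finset.mem_singleton.mp this)
      rw [flipC_apply_ne x hj]
      tauto
  · rintro ⟨i, rfl⟩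
    rw [diffs_flipC]; simp

lemma flipC_injective (x : Fin n → Bool) : Function.Injective (flipC x) := by
  intro i j h
  by_contra hij
  have h1 : flipC x i i = !x i := flipC_apply_self x i
  have h2 : flipC x j i = x i := flipC_apply_ne x hij
  rw [h] at h1
  rw [h1] at h2
  cases x i <;> simp_all

lemma cube_codeg (u v : Fin n → Bool) (huv : u ≠ v) :
    (Finset.univ.filter fun z => (cubeGraph n).Adj u z ∧ (cubeGraph n).Adj v z).card ≤ 2 := by
  classical
  set S := Finset.univ.filter fun z => (cubeGraph n).Adj u z ∧ (cubeGraph n).Adj v z with hS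
  rcases S.eq_empty_or_nonempty with h | ⟨z0, hz0⟩
  · simp [h]
  · -- triangle : diffs u v ⊆ diffs u z0 ∪ diffs z0 v, so card diffs u v ≤ 2
    have hz0' : (cubeGraph n).Adj u z0 ∧ (cubeGraph n).Adj v z0 := by
      simpa [hS] using hz0
    have h1 := (cube_adj_iff u z0).mp hz0'.1
    have h2 := (cube_adj_iff v z0).mp hz0'.2
    have hsub : (Finset.univ.filter fun i => u i ≠ v i) ⊆
        (Finset.univ.filter fun i => u i ≠ z0 i) ∪ (Finset.univ.filter fun i => v i ≠ z0 i) := by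
      intro i hi
      simp only [Finset.mem_filter, Finset.mem_univ, true_and, Finset.mem_union] at hi ⊢
      by_contra hcon
      push_neg at hcon
      exact hi (hcon.1.trans hcon.2.symm)
    have hDle : (Finset.univ.filter fun i => u i ≠ v i).card ≤ 2 := by
      calc (Finset.univ.filter fun i => u i ≠ v i).card
          ≤ _ := Finset.card_le_card hsub
        _ ≤ (Finset.univ.filter fun i => u i ≠ z0 i).card
            + (Finset.univ.filter fun i => v i ≠ z0 i).card := Finset.card_union_le _ _
        _ ≤ 2 := by rw [h1, h2]
    -- injection from S into diffs u v
    have : S.card ≤ (Finset.univ.filter fun i => u i ≠ v i).card := by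
      have hfun : ∀ z ∈ S, ∃ i, z = flipC u i ∧ i ∈ (Finset.univ.filter fun i => u i ≠ v i) := by
        intro z hz
        have hz' : (cubeGraph n).Adj u z ∧ (cubeGraph n).Adj v z := by simpa [hS] using hz
        obtain ⟨i, rfl⟩ := (cube_adj_iff_exists u z).mp hz'.1
        obtain ⟨j, hj⟩ := (cube_adj_iff_exists v _).mp hz'.2
        refine ⟨i, rfl, ?_⟩
        simp only [Finset.mem_filter, Finset.mem_univ, true_and]
        intro hui
        -- u i = v i; flipC u i differs from v exactly at coords where... derive u = v
        apply huv
        funext m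
        by_cases hm : m = i
        · subst hm; exact hui
        · -- off i : (flipC u i) m = u m ; and flipC u i = flipC v j
          have e1 : flipC u i m = u m := flipC_apply_ne u hm
          -- flipC u i i = !u i = !v i ≠ v i so i ∈ diffs v (flipC u i) = {j}, hence i = j
          have hij : i = j := by
            have : v i ≠ flipC u i i := by
              rw [flipC_apply_self]
              rw [hui]
              cases v i <;> simp
            have : i ∈ (Finset.univ.filter fun m => v m ≠ flipC v j m) := by
              rw [← hj]; simpa using this
            rw [diffs_flipC] at this
            exact Finset.mem_singleton.mp this
          have e2 : flipC u i m = v m := by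
            rw [hj]
            exact flipC_apply_ne v (hij ▸ hm)
          rw [← e1, e2]
      choose g hg1 hg2 using hfun
      exact Finset.card_le_card_of_injOn (fun z => if hz : z ∈ S then g z hz else g z0 hz0)
        (by intro z hz; have hz' : z ∈ S := hz; simp only [dif_pos hz']; exact Finset.mem_coe.mpr (hg2 z hz'))
        (by
          intro z1 hz1 z2 hz2 he
          simp only [Finset.mem_coe] at hz1 hz2
          simp only [dif_pos hz1, dif_pos hz2] at he
          rw [hg1 z1 hz1, hg1 z2 hz2, he])
    omega

lemma card_cube_vertices : Fintype.card (Fin n → Bool) = 2 ^ n := by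
  simp [Fintype.card_fun]

end CubeBasics

section Lower
variable {n : ℕ}

lemma sym2_rep {α : Type*} (e : Sym2 α) : ∃ a b, e = s(a, b) := by
  induction e using Sym2.ind with | _ a b => exact ⟨a, b, rfl⟩

lemma diffs_comm (x y : Fin n → Bool) :
    (Finset.univ.filter fun i => x i ≠ y i) = (Finset.univ.filter fun i => y i ≠ x i) := by
  ext i; simp [ne_comm]

lemma edge_rep {V : Type*} {G : SimpleGraph V} {e : Sym2 V} {v : V}
    (he : e ∈ G.edgeSet) (hv : v ∈ e) : ∃ w, e = s(v, w) ∧ G.Adj v w := by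
  induction e using Sym2.ind with
  | _ a b =>
    rw [Sym2.mem_iff] at hv
    have hab : G.Adj a b := G.mem_edgeSet.mp he
    rcases hv with rfl | rfl
    · exact ⟨b, rfl, hab⟩
    · exact ⟨a, Sym2.eq_swap, hab.symm⟩

noncomputable def cdir (n : ℕ) : Sym2 (Fin n → Bool) → ℕ :=
  Sym2.lift ⟨fun x y => ∑ i ∈ Finset.univ.filter (fun i => x i ≠ y i), (i : ℕ),
    fun x y => by dsimp only; rw [diffs_comm]⟩

lemma cdir_flipC (x : Fin n → Bool) (i : Fin n) : cdir n s(x, flipC x i) = (i : ℕ) := by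
  rw [cdir, Sym2.lift_mk]
  simp [diffs_flipC]

lemma cdir_proper {H : SimpleGraph (Fin n → Bool)} (hle : H ≤ cubeGraph n) :
    IsProperEdgeColoring H (cdir n) := by
  rintro e1 h1 e2 h2 hne ⟨v, hv1, hv2⟩
  obtain ⟨a, rfl, ha⟩ := edge_rep (edgeSet_mono hle h1) hv1
  obtain ⟨b, rfl, hb⟩ := edge_rep (edgeSet_mono hle h2) hv2
  obtain ⟨i, rfl⟩ := (cube_adj_iff_exists v a).mp ha
  obtain ⟨j, rfl⟩ := (cube_adj_iff_exists v b).mp hb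
  rw [cdir_flipC, cdir_flipC]
  intro hij
  exact hne (by rw [Fin.val_injective hij])

def lowGraph (n m : ℕ) : SimpleGraph (Fin n → Bool) where
  Adj x y := (Finset.univ.filter fun i => x i ≠ y i).card = 1 ∧ ∀ i, x i ≠ y i → (i : ℕ) < m
  symm := by
    constructor
    intro x y h
    constructor
    · rw [← diffs_comm]; exact h.1
    · intro i hi; exact h.2 i hi.symm
  loopless := by constructor; intro x h; simpa using h.1

lemma lowGraph_le (m : ℕ) : lowGraph n m ≤ cubeGraph n := by
  intro x y h
  exact (cube_adj_iff x y).mpr h.1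

lemma lowGraph_adj_iff (m : ℕ) (x y : Fin n → Bool) :
    (lowGraph n m).Adj x y ↔ ∃ i : Fin n, (i : ℕ) < m ∧ y = flipC x i := by
  constructor
  · rintro ⟨h1, h2⟩
    obtain ⟨i, rfl⟩ := (cube_adj_iff_exists x _).mp ((cube_adj_iff x _).mpr h1)
    refine ⟨i, h2 i ?_, rfl⟩
    rw [flipC_apply_self]
    cases x i <;> simp
  · rintro ⟨i, him, rfl⟩
    constructor
    · rw [diffs_flipC]; simp
    · intro j hj
      have : j ∈ (Finset.univ.filter fun j => x j ≠ flipC x i j) := by simpa using hj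
      rw [diffs_flipC] at this
      rwa [Finset.mem_singleton.mp this]

lemma lowGraph_degree {m : ℕ} (hmn : m ≤ n) (v : Fin n → Bool) :
    (lowGraph n m).degree v = m := by
  have hnb : (lowGraph n m).neighborFinset v
      = (Finset.univ.filter fun i : Fin n => (i : ℕ) < m).image (flipC v) := by
    ext w
    simp only [mem_neighborFinset, lowGraph_adj_iff, Finset.mem_image, Finset.mem_filter,
      Finset.mem_univ, true_and]
    constructor
    · rintro ⟨i, him, rfl⟩; exact ⟨i, him, rfl⟩
    · rintro ⟨i, him, rfl⟩; exact ⟨i, him, rfl⟩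
  rw [SimpleGraph.degree, hnb, Finset.card_image_of_injective _ (flipC_injective v)]
  have himg : (Finset.univ.filter fun i : Fin n => (i : ℕ) < m).image Fin.val
      = Finset.range m := by
    ext j
    simp only [Finset.mem_image, Finset.mem_filter, Finset.mem_univ, true_and, Finset.mem_range]
    constructor
    · rintro ⟨i, him, rfl⟩; exact him
    · intro hj; exact ⟨⟨j, lt_of_lt_of_le hj hmn⟩, hj, rfl⟩
  have h3 := Finset.card_image_of_injective
    (Finset.univ.filter fun i : Fin n => (i : ℕ) < m) Fin.val_injective
  rw [himg, Finset.card_range] at h3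
  exact h3.symm

lemma edgeSet_ncard_eq {V : Type*} [Fintype V] (G : SimpleGraph V) :
    G.edgeSet.ncard = G.edgeFinset.card := by
  rw [← SimpleGraph.coe_edgeFinset, Set.ncard_coe_finset]

lemma lowGraph_card {m : ℕ} (hmn : m ≤ n) :
    (lowGraph n m).edgeSet.ncard = m * 2 ^ (n - 1) := by
  have h2 : 2 * (lowGraph n m).edgeFinset.card = 2 ^ n * m := by
    rw [← sum_degrees_eq_twice_card_edges]
    rw [Finset.sum_congr rfl (fun v _ => lowGraph_degree hmn v)]
    rw [Finset.sum_const, Finset.card_univ, card_cube_vertices, smul_eq_mul]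
  rw [edgeSet_ncard_eq]
  cases n with
  | zero =>
    have hm0 : m = 0 := Nat.le_zero.mp hmn
    subst hm0
    rw [zero_mul]
    omega
  | succ n' =>
    have hp : 2 ^ (n' + 1) = 2 * 2 ^ n' := by ring
    rw [hp, mul_assoc] at h2
    have hC : (lowGraph (n' + 1) m).edgeFinset.card = 2 ^ n' * m :=
      Nat.eq_of_mul_eq_mul_left (by norm_num) h2
    rw [hC, Nat.succ_sub_one, Nat.mul_comm]

lemma low_no_rainbow {W : Type*} [Fintype W] (T : SimpleGraph W) (k m : ℕ)
    (hk : T.edgeSet.ncard = k) (hmk : m < k) :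
    ¬ HasRainbowCopy (lowGraph n m) (cdir n) T := by
  rintro ⟨f, hadj, hrb⟩
  have hcard : T.edgeFinset.card = k := by rw [← hk, edgeSet_ncard_eq]
  have hle : T.edgeFinset.card ≤ (Finset.range m).card := by
    apply Finset.card_le_card_of_injOn (fun e => cdir n (Sym2.map f e))
    · intro e he
      obtain ⟨a, b, rfl⟩ := sym2_rep e
      have hab : T.Adj a b := by rwa [Finset.mem_coe, mem_edgeFinset, mem_edgeSet] at he
      obtain ⟨i, him, hfb⟩ := (lowGraph_adj_iff m _ _).mp (hadj hab)
      show cdir n (Sym2.map (⇑f) s(a, b)) ∈ ((Finset.range m : Finset ℕ) : Set ℕ)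
      rw [Finset.mem_coe, Sym2.map_pair_eq, hfb, cdir_flipC]
      simpa using him
    · intro e1 h1 e2 h2 heq
      by_contra hne
      obtain ⟨a, b, rfl⟩ := sym2_rep e1
      obtain ⟨a', b', rfl⟩ := sym2_rep e2
      simp only [Finset.mem_coe, mem_edgeFinset, mem_edgeSet] at h1 h2
      exact hrb h1 h2 hne (by simpa [Sym2.map_pair_eq] using heq)
  rw [hcard, Finset.card_range] at hle
  omega

end Lower

lemma edge_rep' {V : Type*} {G : SimpleGraph V} {e : Sym2 V} {v : V}
    (he : e ∈ G.edgeSet) (hv : v ∈ e) : ∃ w, e = s(v, w) ∧ G.Adj v w := by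
  induction e using Sym2.ind with
  | _ a b =>
    rw [Sym2.mem_iff] at hv
    have hab : G.Adj a b := G.mem_edgeSet.mp he
    rcases hv with rfl | rfl
    · exact ⟨b, rfl, hab⟩
    · exact ⟨a, Sym2.eq_swap, hab.symm⟩

section Peel
variable {V : Type*} [Fintype V] [DecidableEq V] (H : SimpleGraph V)

/-- edges of `H` with both endpoints in `S` -/
noncomputable def edgesIn (S : Finset V) : Finset (Sym2 V) :=
  H.edgeFinset.filter (fun e => ∀ x ∈ e, x ∈ S)

lemma edgesIn_univ : edgesIn H Finset.univ = H.edgeFinset := by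
  apply Finset.filter_true_of_mem
  intro e _
  intro x _
  exact Finset.mem_univ x

lemma card_filter_mem_le (S : Finset V) (x : V) :
    ((edgesIn H S).filter (fun e => x ∈ e)).card ≤ (H.neighborFinset x ∩ S).card := by
  have hmem : ∀ e ∈ (edgesIn H S).filter (fun e => x ∈ e),
      ∃ w, e = s(x, w) ∧ w ∈ H.neighborFinset x ∩ S := by
    intro e he
    simp only [Finset.mem_filter, edgesIn, mem_edgeFinset] at he
    obtain ⟨⟨he1, he2⟩, hxe⟩ := he
    obtain ⟨w, rfl, hadj⟩ := edge_rep' he1 hxe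
    refine ⟨w, rfl, ?_⟩
    rw [Finset.mem_inter, mem_neighborFinset]
    exact ⟨hadj, he2 w (Sym2.mem_mk_right x w)⟩
  choose g hg1 hg2 using hmem
  rcases Finset.eq_empty_or_nonempty ((edgesIn H S).filter (fun e => x ∈ e)) with h | ⟨e0, he0⟩
  · simp [h]
  · apply Finset.card_le_card_of_injOn (fun e => if he : e ∈ _ then g e he else g e0 he0)
    · intro e he; have he' : e ∈ (edgesIn H S).filter (fun e => x ∈ e) := he; simp only [dif_pos he']; exact Finset.mem_coe.mpr (hg2 e he')
    · intro e1 h1 e2 h2 heq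
      simp only [Finset.mem_coe] at h1 h2
      simp only [dif_pos h1, dif_pos h2] at heq
      rw [hg1 e1 h1, hg1 e2 h2, heq]

lemma edgesIn_erase (S : Finset V) (x : V) :
    (edgesIn H S).card ≤ (edgesIn H (S.erase x)).card + (H.neighborFinset x ∩ S).card := by
  have hsub : edgesIn H S ⊆ edgesIn H (S.erase x) ∪ (edgesIn H S).filter (fun e => x ∈ e) := by
    intro e he
    rw [Finset.mem_union]
    by_cases hx : x ∈ e
    · right; exact Finset.mem_filter.mpr ⟨he, hx⟩
    · left
      simp only [edgesIn, Finset.mem_filter] at he ⊢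
      refine ⟨he.1, fun y hy => Finset.mem_erase.mpr ⟨?_, he.2 y hy⟩⟩
      rintro rfl; exact hx hy
  calc (edgesIn H S).card ≤ _ := Finset.card_le_card hsub
    _ ≤ (edgesIn H (S.erase x)).card + ((edgesIn H S).filter (fun e => x ∈ e)).card :=
        Finset.card_union_le _ _
    _ ≤ _ := by gcongr; exact card_filter_mem_le H S x

lemma peel (d : ℕ) (S : Finset V) : ∃ C ⊆ S,
    (∀ x ∈ C, d ≤ (H.neighborFinset x ∩ C).card) ∧
    (edgesIn H S).card ≤ (edgesIn H C).card + (d - 1) * (S.card - C.card) := by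
  induction S using Finset.strongInductionOn with
  | _ S ih =>
    by_cases hall : ∀ x ∈ S, d ≤ (H.neighborFinset x ∩ S).card
    · exact ⟨S, Finset.Subset.refl S, hall, by simp⟩
    · push_neg at hall
      obtain ⟨x, hxS, hxd⟩ := hall
      obtain ⟨C, hCsub, hCdeg, hCcard⟩ := ih (S.erase x) (Finset.erase_ssubset hxS)
      refine ⟨C, hCsub.trans (Finset.erase_subset x S), hCdeg, ?_⟩
      have h1 := edgesIn_erase H S x
      have h2 : (H.neighborFinset x ∩ S).card ≤ d - 1 := by omega
      have h3 : (S.erase x).card = S.card - 1 := Finset.card_erase_of_mem hxS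
      have h4 : C.card ≤ (S.erase x).card := Finset.card_le_card hCsub
      have h5 : 1 ≤ S.card := Finset.card_pos.mpr ⟨x, hxS⟩
      have harith : S.card - C.card = ((S.erase x).card - C.card) + 1 := by omega
      rw [harith, Nat.mul_succ]
      omega

lemma double_count (S : Finset V) :
    2 * (edgesIn H S).card ≤ ∑ v ∈ S, H.degree v := by
  have hstep1 : ∀ v, ((edgesIn H S).filter (fun e => v ∈ e)).card ≤ H.degree v := by
    intro v
    rw [← card_incidenceFinset_eq_degree]
    apply Finset.card_le_card
    intro e he
    simp only [edgesIn, Finset.mem_filter, mem_edgeFinset] at he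
    rw [mem_incidenceFinset]
    exact ⟨he.1.1, he.2⟩
  have hswap : ∑ v ∈ S, ((edgesIn H S).filter (fun e => v ∈ e)).card
      = ∑ e ∈ edgesIn H S, (S.filter (fun v => v ∈ e)).card := by
    simp only [Finset.card_filter]
    exact Finset.sum_comm
  have htwo : ∀ e ∈ edgesIn H S, (S.filter (fun v => v ∈ e)).card = 2 := by
    intro e
    induction e using Sym2.ind with
    | _ a b =>
      intro he
      simp only [edgesIn, Finset.mem_filter, mem_edgeFinset, mem_edgeSet] at he
      have hne : a ≠ b := he.1.ne
      have ha : a ∈ S := he.2 a (Sym2.mem_mk_left a b)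
      have hb : b ∈ S := he.2 b (Sym2.mem_mk_right a b)
      have hset : S.filter (fun v => v ∈ s(a, b)) = {a, b} := by
        ext v
        simp only [Finset.mem_filter, Sym2.mem_iff, Finset.mem_insert, Finset.mem_singleton]
        constructor
        · rintro ⟨_, h⟩; exact h
        · rintro (rfl | rfl) <;> simp [ha, hb]
      rw [hset, Finset.card_pair hne]
  calc 2 * (edgesIn H S).card = ∑ _e ∈ edgesIn H S, 2 := by
        rw [Finset.sum_const, smul_eq_mul, mul_comm]
    _ = ∑ e ∈ edgesIn H S, (S.filter (fun v => v ∈ e)).card :=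
        (Finset.sum_congr rfl htwo).symm
    _ = ∑ v ∈ S, ((edgesIn H S).filter (fun e => v ∈ e)).card := hswap.symm
    _ ≤ ∑ v ∈ S, H.degree v := Finset.sum_le_sum fun v _ => hstep1 v

end Peel

section Tree
variable {W : Type*} [Fintype W] (T : SimpleGraph W) (x0 : W)

/-- leaves of T adjacent to x0 -/
noncomputable def leafSet : Finset W :=
  Finset.univ.filter (fun y => T.Adj x0 y ∧ (T.neighborSet y).ncard = 1)

lemma mem_leafSet {y : W} : y ∈ leafSet T x0 ↔ T.Adj x0 y ∧ (T.neighborSet y).ncard = 1 := by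
  simp [leafSet]

lemma leaf_nbr {y : W} (hy : y ∈ leafSet T x0) {z : W} (hz : T.Adj y z) : z = x0 := by
  rw [mem_leafSet] at hy
  obtain ⟨a, ha⟩ := Set.ncard_eq_one.mp hy.2
  have hx0 : x0 ∈ T.neighborSet y := (T.mem_neighborSet y x0).mpr hy.1.symm
  have hz' : z ∈ T.neighborSet y := (T.mem_neighborSet y z).mpr hz
  rw [ha] at hx0 hz'
  rw [Set.mem_singleton_iff] at hx0 hz'
  rw [hz', hx0]

lemma x0_not_leaf : x0 ∉ leafSet T x0 := by
  rw [mem_leafSet]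
  rintro ⟨h, -⟩
  exact T.loopless.irrefl x0 h

lemma walk_avoiding (hT : T.IsTree) {z : W} (hz : z ∉ leafSet T x0) :
    ∃ p : T.Walk x0 z, ∀ y ∈ p.support, y ∉ leafSet T x0 := by
  obtain ⟨w⟩ := hT.isConnected x0 z
  refine ⟨↑w.toPath, ?_⟩
  intro y hy hyL
  have hyx0 : y ≠ x0 := fun h => x0_not_leaf T x0 (h ▸ hyL)
  have hyz : y ≠ z := fun h => hz (h ▸ hyL)
  set p : T.Walk x0 z := ↑w.toPath with hp
  have hpath : p.IsPath := w.toPath.2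
  have hysup : y ∈ p.support := hy
  set p1 := p.takeUntil y hysup
  set p2 := p.dropUntil y hysup
  obtain ⟨u', hadj, q2, hq2⟩ := SimpleGraph.Walk.exists_eq_cons_of_ne hyz p2
  have hu' : u' = x0 := leaf_nbr T x0 hyL hadj
  have hx1 : x0 ∈ p1.support := p1.start_mem_support
  have hx2 : x0 ∈ p2.support.tail := by
    rw [hq2, SimpleGraph.Walk.support_cons]
    simp only [List.tail_cons]
    exact hu' ▸ q2.start_mem_support
  have hspec := p.take_spec hysup
  have hnodup : p.support.Nodup := (SimpleGraph.Walk.isPath_def p).mp hpath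
  rw [← hspec, SimpleGraph.Walk.support_append, List.nodup_append] at hnodup
  exact hnodup.2.2 x0 hx1 x0 hx2 rfl

lemma prefix_unique_nbr (hT : T.IsTree) (S : Finset W)
    (hpre : ∀ a ∈ S, ∃ p : T.Walk x0 a, ∀ z ∈ p.support, z ∈ S)
    {a : W} (ha : a ∉ S) {b b' : W} (hb : b ∈ S) (hb' : b' ∈ S)
    (hab : T.Adj a b) (hab' : T.Adj a b') : b = b' := by
  by_contra hbb
  obtain ⟨wb, hwb⟩ := hpre b hb
  obtain ⟨wb', hwb'⟩ := hpre b' hb'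
  set w : T.Walk b b' := wb.reverse.append wb' with hw
  have hwsup : ∀ z ∈ w.support, z ∈ S := by
    intro z hz
    rw [hw, SimpleGraph.Walk.support_append] at hz
    rcases List.mem_append.mp hz with h | h
    · rw [SimpleGraph.Walk.support_reverse] at h
      exact hwb z (List.mem_reverse.mp h)
    · exact hwb' z (List.mem_of_mem_tail h)
  set q := w.toPath with hq
  have hqsup : ∀ z ∈ (q : T.Walk b b').support, z ∈ S := by
    intro z hz
    exact hwsup z (SimpleGraph.Walk.support_toPath_subset w hz)
  -- the path b - a - b'
  have h1 : b ≠ a := fun h => ha (h ▸ hb)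
  have h2 : a ≠ b' := fun h => ha (by rw [h]; exact hb')
  have hpath2 : (SimpleGraph.Walk.cons hab.symm (SimpleGraph.Walk.cons hab' SimpleGraph.Walk.nil)
      : T.Walk b b').IsPath := by
    rw [SimpleGraph.Walk.isPath_def]
    simp [h1, h2, hbb, h1.symm, h2.symm]
  have := hT.IsAcyclic.path_unique ⟨_, hpath2⟩ q
  have hasup : a ∈ (q : T.Walk b b').support := by
    rw [← this]
    simp [SimpleGraph.Walk.support_cons]
  exact ha (hqsup a hasup)
end Tree

lemma embed_rainbow {n : ℕ} {W : Type*} [Fintype W] (T : SimpleGraph W) (hT : T.IsTree)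
    (x0 : W) (t : ℕ)
    (hWt : (Finset.univ \ leafSet T x0).card = t + 1)
    (H : SimpleGraph (Fin n → Bool)) (hle : H ≤ cubeGraph n)
    (c : Sym2 (Fin n → Bool) → ℕ) (hcp : IsProperEdgeColoring H c)
    (C : Finset (Fin n → Bool)) (hCdeg : ∀ x ∈ C, 2 * t + 1 ≤ (H.neighborFinset x ∩ C).card)
    (v : Fin n → Bool) (hvC : v ∈ C) (hvdeg : (leafSet T x0).card + t ≤ H.degree v) :
    HasRainbowCopy H c T := by
  set Lf := leafSet T x0 with hLf
  set Wt := Finset.univ \ Lf with hWtdef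
  have hx0Wt : x0 ∈ Wt := Finset.mem_sdiff.mpr ⟨Finset.mem_univ x0, x0_not_leaf T x0⟩
  -- proper coloring: colors at a vertex are injective
  have colinj : ∀ (u w1 w2 : Fin n → Bool), H.Adj u w1 → H.Adj u w2 →
      c s(u, w1) = c s(u, w2) → w1 = w2 := by
    intro u w1 w2 h1 h2 hc
    by_contra hne
    have hedne : s(u, w1) ≠ s(u, w2) := by
      intro heq
      rcases Sym2.eq_iff.mp heq with ⟨-, h⟩ | ⟨h, -⟩
      · exact hne h
      · exact h2.ne' h.symm
    exact hcp (H.mem_edgeSet.mpr h1) (H.mem_edgeSet.mpr h2) hedne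
      ⟨u, Sym2.mem_mk_left _ _, Sym2.mem_mk_left _ _⟩ hc
  have colbound : ∀ (u : Fin n → Bool) (EC : Finset ℕ) (A : Finset (Fin n → Bool)),
      (∀ w ∈ A, H.Adj u w) → (A.filter (fun w => c s(u, w) ∈ EC)).card ≤ EC.card := by
    intro u EC A hA
    apply Finset.card_le_card_of_injOn (fun w => c s(u, w))
    · intro w hw; exact (Finset.mem_filter.mp hw).2
    · intro w1 h1 w2 h2 heq
      simp only [Finset.mem_coe, Finset.mem_filter] at h1 h2
      exact colinj u w1 w2 (hA _ h1.1) (hA _ h2.1) heq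
  -- MAIN INDUCTION: greedy rainbow embedding of the trunk
  have main : ∀ m : ℕ, m ≤ t → ∃ (S : Finset W) (φ : W → (Fin n → Bool)) (EC : Finset ℕ),
      x0 ∈ S ∧ S ⊆ Wt ∧ S.card = m + 1 ∧
      (∀ a ∈ S, ∃ p : T.Walk x0 a, ∀ z ∈ p.support, z ∈ S) ∧
      φ x0 = v ∧ Set.InjOn φ ↑S ∧ (∀ a ∈ S, φ a ∈ C) ∧
      (∀ a ∈ S, ∀ b ∈ S, T.Adj a b → H.Adj (φ a) (φ b)) ∧
      (∀ a ∈ S, a ≠ x0 → ¬ T.Adj x0 a → ¬ H.Adj v (φ a)) ∧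
      (∀ a ∈ S, ∀ b ∈ S, T.Adj a b → c s(φ a, φ b) ∈ EC) ∧
      EC.card ≤ m ∧
      (∀ a ∈ S, ∀ b ∈ S, ∀ a' ∈ S, ∀ b' ∈ S, T.Adj a b → T.Adj a' b' →
        s(a, b) ≠ s(a', b') → c s(φ a, φ b) ≠ c s(φ a', φ b')) := by
    intro m
    induction m with
    | zero =>
      intro _
      refine ⟨{x0}, fun _ => v, ∅, Finset.mem_singleton_self x0,
        Finset.singleton_subset_iff.mpr hx0Wt, by simp, ?_, rfl, ?_, ?_, ?_, ?_, ?_, by simp, ?_⟩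
      · intro a ha
        rw [Finset.mem_singleton] at ha
        subst ha
        exact ⟨SimpleGraph.Walk.nil, by simp⟩
      · intro x hx y hy _
        simp only [Finset.coe_singleton, Set.mem_singleton_iff] at hx hy
        rw [hx, hy]
      · intro a _; exact hvC
      · intro a ha b hb hadj
        rw [Finset.mem_singleton] at ha hb
        exact absurd hadj (by rw [ha, hb]; exact T.loopless.irrefl x0)
      · intro a ha hne _
        exact absurd (Finset.mem_singleton.mp ha) hne
      · intro a ha b hb hadj
        rw [Finset.mem_singleton] at ha hb
        exact absurd hadj (by rw [ha, hb]; exact T.loopless.irrefl x0)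
      · intro a ha b hb a' ha' b' hb' hadj _ _
        rw [Finset.mem_singleton] at ha hb
        exact absurd hadj (by rw [ha, hb]; exact T.loopless.irrefl x0)
    | succ m ih =>
      intro hm
      obtain ⟨S, φ, EC, hS1, hS2, hS3, hS4, hφ1, hφ2, hφ3, hφ4, hφ5, hφ6, hφ7, hφ8⟩ :=
        ih (by omega)
      -- pick a new vertex adjacent to S
      have hsd : (Wt \ S).Nonempty := by
        rw [← Finset.card_pos]
        have := Finset.le_card_sdiff S Wt
        omega
      obtain ⟨z, hz⟩ := hsd
      rw [Finset.mem_sdiff] at hz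
      obtain ⟨p, hp⟩ := walk_avoiding T x0 hT (Finset.mem_sdiff.mp hz.1).2
      obtain ⟨d, hd, hd1, hd2⟩ := p.exists_boundary_dart ↑S (Finset.mem_coe.mpr hS1)
        (fun hmem => hz.2 (Finset.mem_coe.mp hmem))
      set a := d.toProd.2 with hadef
      have haS : a ∉ S := fun h => hd2 (Finset.mem_coe.mpr h)
      have haWt : a ∈ Wt := Finset.mem_sdiff.mpr
        ⟨Finset.mem_univ a, hp a (p.dart_snd_mem_support_of_mem_darts hd)⟩
      have hax0 : a ≠ x0 := fun h => haS (by rw [h]; exact hS1)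
      obtain ⟨b, hbS, hbadj, hbx0⟩ : ∃ b, b ∈ S ∧ T.Adj b a ∧ (b = x0 ↔ T.Adj x0 a) := by
        by_cases hx0a : T.Adj x0 a
        · exact ⟨x0, hS1, hx0a, iff_of_true rfl hx0a⟩
        · exact ⟨d.toProd.1, Finset.mem_coe.mp hd1, d.adj,
            iff_of_false (fun h => hx0a (h ▸ d.adj)) hx0a⟩
      have huniq : ∀ s ∈ S, T.Adj a s → s = b := fun s hs has =>
        prefix_unique_nbr T x0 hT S hS4 haS hs hbS has hbadj.symm
      set u := φ b with hudef
      have huC : u ∈ C := hφ3 b hbS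
      have huv : b ≠ x0 → u ≠ v := by
        intro hbne hueq
        exact hbne (hφ2 (Finset.mem_coe.mpr hbS) (Finset.mem_coe.mpr hS1) (hueq.trans hφ1.symm))
      set A := H.neighborFinset u ∩ C with hAdef
      have hA : 2 * t + 1 ≤ A.card := hCdeg u huC
      have hAadj : ∀ w ∈ A, H.Adj u w := by
        intro w hw
        exact (H.mem_neighborFinset u w).mp (Finset.mem_inter.mp hw).1
      set F1 := (S.image φ).erase u with hF1def
      have hF1card : F1.card = m := by
        rw [hF1def, Finset.card_erase_of_mem (Finset.mem_image_of_mem φ hbS),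
          Finset.card_image_of_injOn hφ2, hS3]
        omega
      set F2 := A.filter (fun w => c s(u, w) ∈ EC) with hF2def
      have hF2card : F2.card ≤ m := le_trans (colbound u EC A hAadj) hφ7
      set F3 := A.filter (fun w => H.Adj v w) with hF3def
      have hF3card : b ≠ x0 → F3.card ≤ 2 := by
        intro hbne
        refine le_trans (Finset.card_le_card ?_) (cube_codeg u v (huv hbne))
        intro w hw
        rw [Finset.mem_filter] at hw ⊢
        exact ⟨Finset.mem_univ w, hle (hAadj w hw.1), hle hw.2⟩
      set Fbad := F1 ∪ F2 ∪ (if b = x0 then (∅ : Finset (Fin n → Bool)) else F3) with hFbaddef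
      have hFbadcard : Fbad.card ≤ 2 * m + 2 := by
        by_cases hbx : b = x0
        · rw [hFbaddef, if_pos hbx]
          calc (F1 ∪ F2 ∪ ∅).card ≤ (F1 ∪ F2).card := Finset.card_le_card (by simp)
            _ ≤ F1.card + F2.card := Finset.card_union_le _ _
            _ ≤ 2 * m + 2 := by omega
        · rw [hFbaddef, if_neg hbx]
          calc (F1 ∪ F2 ∪ F3).card ≤ (F1 ∪ F2).card + F3.card := Finset.card_union_le _ _
            _ ≤ F1.card + F2.card + F3.card := by
                have := Finset.card_union_le F1 F2; omega
            _ ≤ 2 * m + 2 := by have := hF3card hbx; omega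
      have hgood : (A \ Fbad).Nonempty := by
        rw [← Finset.card_pos]
        have := Finset.le_card_sdiff Fbad A
        omega
      obtain ⟨w, hw⟩ := hgood
      rw [Finset.mem_sdiff] at hw
      obtain ⟨hwA, hwF⟩ := hw
      have hwadj : H.Adj u w := hAadj w hwA
      have hwC : w ∈ C := (Finset.mem_inter.mp hwA).2
      have hwu : w ≠ u := hwadj.ne'
      have hwS : w ∉ S.image φ := by
        intro hmem
        exact hwF (Finset.mem_union_left _ (Finset.mem_union_left _
          (Finset.mem_erase.mpr ⟨hwu, hmem⟩)))
      have hwcol : c s(u, w) ∉ EC := by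
        intro hmem
        exact hwF (Finset.mem_union_left _ (Finset.mem_union_right _
          (Finset.mem_filter.mpr ⟨hwA, hmem⟩)))
      have hwv : b ≠ x0 → ¬ H.Adj v w := by
        intro hbne hadjvw
        apply hwF
        rw [hFbaddef, if_neg hbne]
        exact Finset.mem_union_right _ (Finset.mem_filter.mpr ⟨hwA, hadjvw⟩)
      -- the extended embedding
      set φ' := Function.update φ a w with hφ'def
      have hφ'a : φ' a = w := Function.update_self a w φ
      have hφ'eq : ∀ s ∈ S, φ' s = φ s := fun s hs =>
        Function.update_of_ne (fun h => haS (by rw [← h]; exact hs)) w φ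
      have hx0a' : x0 ≠ a := fun h => hax0 h.symm
      -- edge classification in insert a S
      have hclass : ∀ r1 r2, r1 ∈ insert a S → r2 ∈ insert a S → T.Adj r1 r2 →
          (r1 ∈ S ∧ r2 ∈ S) ∨ (s(r1, r2) = s(a, b) ∧ c s(φ' r1, φ' r2) = c s(u, w)) := by
        intro r1 r2 hpmem hqmem hadj
        rcases Finset.mem_insert.mp hpmem with h1 | hpS
        · rcases Finset.mem_insert.mp hqmem with h2 | hqS
          · exact absurd hadj (by rw [h1, h2]; exact T.loopless.irrefl a)
          · have hqb : r2 = b := huniq r2 hqS (h1 ▸ hadj)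
            right
            constructor
            · rw [h1, hqb]
            · rw [h1, hqb, hφ'a, hφ'eq b hbS, ← hudef]
              exact congrArg c Sym2.eq_swap
        · rcases Finset.mem_insert.mp hqmem with h2 | hqS
          · have hpb : r1 = b := huniq r1 hpS (h2 ▸ hadj.symm)
            right
            constructor
            · rw [h2, hpb]; exact Sym2.eq_swap
            · rw [h2, hpb, hφ'a, hφ'eq b hbS, ← hudef]
          · exact Or.inl ⟨hpS, hqS⟩
      refine ⟨insert a S, φ', insert (c s(u, w)) EC, Finset.mem_insert_of_mem hS1,
        Finset.insert_subset haWt hS2, by rw [Finset.card_insert_of_notMem haS, hS3], ?_,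
        ?_, ?_, ?_, ?_, ?_, ?_, ?_, ?_⟩
      · -- prefix walks
        intro s hs
        rcases Finset.mem_insert.mp hs with rfl | hsS
        · obtain ⟨pb, hpb⟩ := hS4 b hbS
          refine ⟨pb.concat hbadj, ?_⟩
          intro z hz
          rw [SimpleGraph.Walk.support_concat] at hz
          rcases List.mem_append.mp hz with h | h
          · exact Finset.mem_insert_of_mem (hpb z h)
          · rw [List.mem_singleton] at h
            rw [h]
            exact Finset.mem_insert_self _ _
        · obtain ⟨ps, hps⟩ := hS4 s hsS
          exact ⟨ps, fun z hz => Finset.mem_insert_of_mem (hps z hz)⟩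
      · -- φ' x0 = v
        rw [hφ'def, Function.update_of_ne hx0a' w φ]
        exact hφ1
      · -- InjOn
        intro x hx y hy heq
        rw [Finset.coe_insert, Set.mem_insert_iff] at hx hy
        rcases hx with rfl | hxS
        · rcases hy with rfl | hyS
          · rfl
          · rw [hφ'a, hφ'eq y (Finset.mem_coe.mp hyS)] at heq
            exact absurd (by rw [heq]; exact Finset.mem_image_of_mem φ (Finset.mem_coe.mp hyS)) hwS
        · rcases hy with rfl | hyS
          · rw [hφ'a, hφ'eq x (Finset.mem_coe.mp hxS)] at heq
            exact absurd (by rw [← heq]; exact Finset.mem_image_of_mem φ (Finset.mem_coe.mp hxS)) hwS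
          · rw [hφ'eq x (Finset.mem_coe.mp hxS), hφ'eq y (Finset.mem_coe.mp hyS)] at heq
            exact hφ2 hxS hyS heq
      · -- maps into C
        intro s hs
        rcases Finset.mem_insert.mp hs with rfl | hsS
        · rw [hφ'a]; exact hwC
        · rw [hφ'eq s hsS]; exact hφ3 s hsS
      · -- adjacency
        intro r1 hpmem r2 hqmem hadj
        rcases hclass r1 r2 hpmem hqmem hadj with ⟨hpS, hqS⟩ | ⟨hedge, _⟩
        · rw [hφ'eq r1 hpS, hφ'eq r2 hqS]
          exact hφ4 r1 hpS r2 hqS hadj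
        · rcases Sym2.eq_iff.mp hedge with ⟨h1, h2⟩ | ⟨h1, h2⟩
          · rw [h1, h2, hφ'a, hφ'eq b hbS, ← hudef]
            exact hwadj.symm
          · rw [h1, h2, hφ'a, hφ'eq b hbS, ← hudef]
            exact hwadj
      · -- avoid N(v)
        intro s hs hsx0 hnadj
        rcases Finset.mem_insert.mp hs with rfl | hsS
        · rw [hφ'a]
          have hbne : b ≠ x0 := fun h => hnadj (hbx0.mp h)
          exact hwv hbne
        · rw [hφ'eq s hsS]
          exact hφ5 s hsS hsx0 hnadj
      · -- EC covers
        intro r1 hpmem r2 hqmem hadj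
        rcases hclass r1 r2 hpmem hqmem hadj with ⟨hpS, hqS⟩ | ⟨_, hcol⟩
        · rw [hφ'eq r1 hpS, hφ'eq r2 hqS]
          exact Finset.mem_insert_of_mem (hφ6 r1 hpS r2 hqS hadj)
        · rw [hcol]
          exact Finset.mem_insert_self _ _
      · -- EC card
        exact le_trans (Finset.card_insert_le _ _) (by omega)
      · -- rainbow
        intro r1 hpmem r2 hqmem r3 hpmem' r4 hqmem' hadj hadj' hne
        rcases hclass r1 r2 hpmem hqmem hadj with ⟨hpS, hqS⟩ | ⟨hedge, hcol⟩
        · rcases hclass r3 r4 hpmem' hqmem' hadj' with ⟨hpS', hqS'⟩ | ⟨hedge', hcol'⟩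
          · rw [hφ'eq r1 hpS, hφ'eq r2 hqS, hφ'eq r3 hpS', hφ'eq r4 hqS']
            exact hφ8 r1 hpS r2 hqS r3 hpS' r4 hqS' hadj hadj' hne
          · rw [hφ'eq r1 hpS, hφ'eq r2 hqS, hcol']
            intro heq
            exact hwcol (heq ▸ hφ6 r1 hpS r2 hqS hadj)
        · rcases hclass r3 r4 hpmem' hqmem' hadj' with ⟨hpS', hqS'⟩ | ⟨hedge', hcol'⟩
          · rw [hcol, hφ'eq r3 hpS', hφ'eq r4 hqS']
            intro heq
            exact hwcol (heq.symm ▸ hφ6 r3 hpS' r4 hqS' hadj')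
          · exact absurd (hedge.trans hedge'.symm) hne
  -- use the embedding with m = t, so S = Wt
  obtain ⟨S, φ, EC, hS1, hS2, hS3, hS4, hφ1, hφ2, hφ3, hφ4, hφ5, hφ6, hφ7, hφ8⟩ :=
    main t le_rfl
  have hSWt : S = Wt := Finset.eq_of_subset_of_card_le hS2 (by rw [hS3, hWt])
  have hmemS : ∀ x : W, x ∉ Lf → x ∈ S := by
    intro x hx
    rw [hSWt, hWtdef]
    exact Finset.mem_sdiff.mpr ⟨Finset.mem_univ x, hx⟩
  set Av := H.neighborFinset v with hAvdef
  have hAvadj : ∀ w ∈ Av, H.Adj v w := fun w hw => (H.mem_neighborFinset v w).mp hw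
  have hAvcard : Lf.card + t ≤ Av.card := by
    rw [hAvdef, SimpleGraph.card_neighborFinset_eq_degree]
    exact hvdeg
  set Bad := Av.filter (fun w => c s(v, w) ∈ EC) with hBaddef
  have hBadcard : Bad.card ≤ t := le_trans (colbound v EC Av hAvadj) hφ7
  have hGoodcard : Lf.card ≤ (Av \ Bad).card := by
    have h1 := Finset.le_card_sdiff Bad Av
    omega
  obtain ⟨Lv, hLvG, hLvcard⟩ := Finset.exists_subset_card_eq hGoodcard
  have hLvAdj : ∀ w ∈ Lv, H.Adj v w := fun w hw =>
    hAvadj w (Finset.mem_sdiff.mp (hLvG hw)).1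
  have hLvcol : ∀ w ∈ Lv, c s(v, w) ∉ EC := by
    intro w hw hmem
    have h2 := Finset.mem_sdiff.mp (hLvG hw)
    exact h2.2 (Finset.mem_filter.mpr ⟨h2.1, hmem⟩)
  have heqv : Lf.card = Lv.card := hLvcard.symm
  set eqv := Finset.equivOfCardEq heqv with heqvdef
  set g : W → (Fin n → Bool) := fun x => if hx : x ∈ Lf then (eqv ⟨x, hx⟩ : _).1 else φ x
    with hgdef
  have hgnon : ∀ x, x ∉ Lf → g x = φ x := by
    intro x hx
    rw [hgdef]
    exact dif_neg hx
  have hgleaf : ∀ x (hx : x ∈ Lf), g x ∈ Lv := by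
    intro x hx
    rw [hgdef]
    simp only [dif_pos hx]
    exact (eqv ⟨x, hx⟩).2
  have hgx0 : g x0 = v := by rw [hgnon x0 (x0_not_leaf T x0), hφ1]
  have hφnotLv : ∀ y, y ∉ Lf → φ y ∉ Lv := by
    intro y hy hmem
    have hyS : y ∈ S := hmemS y hy
    have hadjv : H.Adj v (φ y) := hLvAdj _ hmem
    by_cases hy0 : y = x0
    · rw [hy0, hφ1] at hadjv
      exact H.loopless.irrefl v hadjv
    · by_cases hadj : T.Adj x0 y
      · have hcol : c s(φ x0, φ y) ∈ EC := hφ6 x0 (hmemS x0 (x0_not_leaf T x0)) y hyS hadj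
        rw [hφ1] at hcol
        exact hLvcol _ hmem hcol
      · exact hφ5 y hyS hy0 hadj hadjv
  have ginj : Function.Injective g := by
    intro x y heq
    by_cases hx : x ∈ Lf <;> by_cases hy : y ∈ Lf
    · rw [hgdef] at heq
      simp only [dif_pos hx, dif_pos hy] at heq
      have h3 := eqv.injective (Subtype.ext heq)
      exact Subtype.mk_eq_mk.mp h3
    · exfalso
      have h1 : g x ∈ Lv := hgleaf x hx
      rw [heq, hgnon y hy] at h1
      exact hφnotLv y hy h1
    · exfalso
      have h1 : g y ∈ Lv := hgleaf y hy
      rw [← heq, hgnon x hx] at h1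
      exact hφnotLv x hx h1
    · rw [hgnon x hx, hgnon y hy] at heq
      exact hφ2 (Finset.mem_coe.mpr (hmemS x hx)) (Finset.mem_coe.mpr (hmemS y hy)) heq
  have hadjf : ∀ ⦃a b : W⦄, T.Adj a b → H.Adj (g a) (g b) := by
    intro a b hadj
    by_cases haL : a ∈ Lf
    · have hb : b = x0 := leaf_nbr T x0 haL hadj
      rw [hb, hgx0]
      exact (hLvAdj _ (hgleaf a haL)).symm
    · by_cases hbL : b ∈ Lf
      · have ha' : a = x0 := leaf_nbr T x0 hbL hadj.symm
        rw [ha', hgx0]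
        exact hLvAdj _ (hgleaf b hbL)
      · rw [hgnon a haL, hgnon b hbL]
        exact hφ4 a (hmemS a haL) b (hmemS b hbL) hadj
  have hclass2 : ∀ r1 r2, T.Adj r1 r2 → (r1 ∉ Lf ∧ r2 ∉ Lf ∧ c s(g r1, g r2) ∈ EC)
      ∨ (∃ y, ∃ _hy : y ∈ Lf, s(r1, r2) = s(x0, y) ∧ c s(g r1, g r2) = c s(v, g y)) := by
    intro r1 r2 hadj
    by_cases h1 : r1 ∈ Lf
    · right
      have h2 : r2 = x0 := leaf_nbr T x0 h1 hadj
      refine ⟨r1, h1, by rw [h2]; exact Sym2.eq_swap, ?_⟩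
      rw [h2, hgx0]
      exact congrArg c Sym2.eq_swap
    · by_cases h2 : r2 ∈ Lf
      · right
        have h1' : r1 = x0 := leaf_nbr T x0 h2 hadj.symm
        exact ⟨r2, h2, by rw [h1'], by rw [h1', hgx0]⟩
      · left
        refine ⟨h1, h2, ?_⟩
        rw [hgnon r1 h1, hgnon r2 h2]
        exact hφ6 r1 (hmemS r1 h1) r2 (hmemS r2 h2) hadj
  refine ⟨⟨g, ginj⟩, hadjf, ?_⟩
  intro a b a' b' hadj hadj' hne
  simp only [Function.Embedding.coeFn_mk]
  rcases hclass2 a b hadj with ⟨ha1, hb1, hcol1⟩ | ⟨y, hy, hedge1, hcol1⟩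
  · rcases hclass2 a' b' hadj' with ⟨ha2, hb2, hcol2⟩ | ⟨y', hy', hedge2, hcol2⟩
    · rw [hgnon a ha1, hgnon b hb1, hgnon a' ha2, hgnon b' hb2]
      rw [hgnon a ha1, hgnon b hb1] at hcol1
      rw [hgnon a' ha2, hgnon b' hb2] at hcol2
      exact hφ8 a (hmemS a ha1) b (hmemS b hb1) a' (hmemS a' ha2) b' (hmemS b' hb2)
        hadj hadj' hne
    · rw [hcol2]
      intro heq
      exact hLvcol _ (hgleaf y' hy') (heq ▸ hcol1)
  · rcases hclass2 a' b' hadj' with ⟨ha2, hb2, hcol2⟩ | ⟨y', hy', hedge2, hcol2⟩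
    · rw [hcol1]
      intro heq
      exact hLvcol _ (hgleaf y hy) (heq.symm ▸ hcol2)
    · rw [hcol1, hcol2]
      have hyy : y ≠ y' := by
        intro h
        exact hne (hedge1.trans (by rw [h, ← hedge2]))
      intro heq
      exact hyy (ginj (colinj v (g y) (g y') (hLvAdj _ (hgleaf y hy))
        (hLvAdj _ (hgleaf y' hy')) heq))

section Main
variable {W : Type*} [Fintype W]

lemma leafSet_card_le (T : SimpleGraph W) (x0 : W) :
    (leafSet T x0).card ≤ T.edgeFinset.card := by
  apply Finset.card_le_card_of_injOn (fun y => s(x0, y))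
  · intro y hy
    rw [Finset.mem_coe, mem_edgeFinset, mem_edgeSet]
    exact ((Finset.mem_filter.mp hy).2).1
  · intro y hy y' hy' heq
    rcases Sym2.eq_iff.mp heq with ⟨-, h⟩ | ⟨h1, h2⟩
    · exact h
    · exfalso
      rw [Finset.mem_coe, leafSet, Finset.mem_filter] at hy'
      rw [← h1] at hy'
      exact T.loopless.irrefl x0 hy'.2.1

lemma leafSet_card_eq (T : SimpleGraph W) (x0 : W) {ℓ : ℕ}
    (hx0 : {y : W | T.Adj x0 y ∧ (T.neighborSet y).ncard = 1}.ncard = ℓ) :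
    (leafSet T x0).card = ℓ := by
  rw [Set.ncard_eq_toFinset_card', Set.toFinset_setOf] at hx0
  rw [leafSet]
  convert hx0 using 2

lemma upper_bound {n : ℕ} (T : SimpleGraph W) (hT : T.IsTree)
    (k ℓ : ℕ) (hTk : T.edgeSet.ncard = k) (x0 : W)
    (hx0 : {y : W | T.Adj x0 y ∧ (T.neighborSet y).ncard = 1}.ncard = ℓ)
    (hl : 3 * k < 4 * ℓ)
    (H : SimpleGraph (Fin n → Bool)) (hle : H ≤ cubeGraph n) (hRF : RainbowFree H T) :
    H.edgeSet.ncard ≤ (k - 1) * 2 ^ (n - 1) := by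
  have hTke : T.edgeFinset.card = k := by rw [← hTk, edgeSet_ncard_eq]
  have hLfcard : (leafSet T x0).card = ℓ := leafSet_card_eq T x0 hx0
  have hℓk : ℓ ≤ k := by rw [← hLfcard, ← hTke]; exact leafSet_card_le T x0
  have hk1 : 1 ≤ k := by omega
  have hcardW : Fintype.card W = k + 1 := by
    have := hT.card_edgeFinset
    omega
  set t := k - ℓ with htdef
  have hWtcard : (Finset.univ \ leafSet T x0).card = t + 1 := by
    rw [Finset.card_sdiff_of_subset (Finset.subset_univ _), Finset.card_univ, hcardW, hLfcard]
    omega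
  have h4t : 4 * t ≤ k - 1 := by omega
  obtain ⟨c, hcp, hnr⟩ := hRF
  obtain ⟨C, hCsub, hCdeg, hCcard⟩ := peel H (2 * t + 1) Finset.univ
  have key : ∀ v ∈ C, H.degree v ≤ k - 1 := by
    intro v hv
    by_contra hdeg
    push_neg at hdeg
    apply hnr
    apply embed_rainbow T hT x0 t hWtcard H hle c hcp C hCdeg v hv
    rw [hLfcard]
    omega
  have hsum : ∑ v ∈ C, H.degree v ≤ C.card * (k - 1) := by
    calc ∑ v ∈ C, H.degree v ≤ C.card • (k - 1) := Finset.sum_le_card_nsmul _ _ _ key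
      _ = C.card * (k - 1) := smul_eq_mul ..
  have hdc := double_count H C
  have hcu : (Finset.univ : Finset (Fin n → Bool)).card = 2 ^ n := by
    rw [Finset.card_univ, card_cube_vertices]
  rw [hcu] at hCcard
  have hCle : C.card ≤ 2 ^ n := by
    rw [← hcu]; exact Finset.card_le_card (Finset.subset_univ C)
  have hred : 2 * t + 1 - 1 = 2 * t := by omega
  rw [hred] at hCcard
  -- arithmetic assembly
  have ha1 : 2 * (edgesIn H Finset.univ).card
      ≤ 2 * (edgesIn H C).card + 2 * ((2 * t) * (2 ^ n - C.card)) := by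
    have := Nat.mul_le_mul_left 2 hCcard
    rw [Nat.mul_add] at this
    exact this
  have ha2 : 2 * ((2 * t) * (2 ^ n - C.card)) ≤ (k - 1) * (2 ^ n - C.card) := by
    rw [← Nat.mul_assoc]
    exact Nat.mul_le_mul_right _ (by omega)
  have ha3 : 2 * (edgesIn H C).card ≤ (k - 1) * C.card := by
    calc 2 * (edgesIn H C).card ≤ ∑ v ∈ C, H.degree v := hdc
      _ ≤ C.card * (k - 1) := hsum
      _ = (k - 1) * C.card := Nat.mul_comm _ _
  have ha4 : (k - 1) * C.card + (k - 1) * (2 ^ n - C.card) = (k - 1) * 2 ^ n := by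
    rw [← Nat.mul_add]
    congr 1
    omega
  have hfin : 2 * H.edgeFinset.card ≤ (k - 1) * 2 ^ n := by
    rw [← edgesIn_univ H]
    omega
  rw [edgeSet_ncard_eq]
  cases n with
  | zero =>
    simp only [pow_zero, Nat.mul_one] at hfin
    simp only [Nat.zero_sub, pow_zero, Nat.mul_one]
    omega
  | succ n' =>
    have hp : (k - 1) * 2 ^ (n' + 1) = 2 * ((k - 1) * 2 ^ n') := by ring
    rw [hp] at hfin
    have : H.edgeFinset.card ≤ (k - 1) * 2 ^ n' := by omega
    simpa using this

theorem stmt7_aux (T : SimpleGraph W) (hT : T.IsTree)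
    (k ℓ n : ℕ) (hTk : T.edgeSet.ncard = k) (x0 : W)
    (hx0 : {y : W | T.Adj x0 y ∧ (T.neighborSet y).ncard = 1}.ncard = ℓ)
    (hl : 3 * k < 4 * ℓ) (hn : k - 1 ≤ n) :
    rainbowExtremalNumber (cubeGraph n) T = (k - 1) * 2 ^ (n - 1) := by
  have hTke : T.edgeFinset.card = k := by rw [← hTk, edgeSet_ncard_eq]
  have hℓk : ℓ ≤ k := by
    rw [← leafSet_card_eq T x0 hx0, ← hTke]
    exact leafSet_card_le T x0
  have hk1 : 1 ≤ k := by omega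
  have hmem : (k - 1) * 2 ^ (n - 1) ∈
      {m | ∃ H : SimpleGraph (Fin n → Bool), H ≤ cubeGraph n ∧ RainbowFree H T ∧
        m = H.edgeSet.ncard} := by
    refine ⟨lowGraph n (k - 1), lowGraph_le (k - 1),
      ⟨cdir n, cdir_proper (lowGraph_le (k - 1)),
        low_no_rainbow T k (k - 1) hTk (by omega)⟩, (lowGraph_card hn).symm⟩
  have hub : ∀ m ∈ {m | ∃ H : SimpleGraph (Fin n → Bool), H ≤ cubeGraph n ∧ RainbowFree H T ∧
      m = H.edgeSet.ncard}, m ≤ (k - 1) * 2 ^ (n - 1) := by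
    rintro m ⟨H, hle, hRF, rfl⟩
    exact upper_bound T hT k ℓ hTk x0 hx0 hl H hle hRF
  rw [rainbowExtremalNumber]
  exact le_antisymm (csSup_le ⟨_, hmem⟩ hub) (le_csSup ⟨_, hub⟩ hmem)
end Main

/-- Let `T` be a tree with `k` edges having a vertex `x₀` adjacent to
`ℓ` leaves, where `4ℓ > 3k`. Then for every `n ≥ k-1`,
`ex*(Q_n, T) = (k-1) · 2^(n-1)`. -/
theorem stmt7 {W : Type*} [Fintype W] (T : SimpleGraph W) (hT : T.IsTree)
    (k ℓ n : ℕ) (hTk : T.edgeSet.ncard = k) (x0 : W)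
    (hx0 : {y : W | T.Adj x0 y ∧ (T.neighborSet y).ncard = 1}.ncard = ℓ)
    (hl : 3 * k < 4 * ℓ) (hn : k - 1 ≤ n) :
    rainbowExtremalNumber (cubeGraph n) T = (k - 1) * 2 ^ (n - 1) :=
  stmt7_aux T hT k ℓ n hTk x0 hx0 hl hn
end

section
/- If G is a triangle-free graph (containing no K_3), then ex*(G, P_3) ≤ |V(G)|; that is, every subgraph of G with more than |V(G)| edges contains, under every proper edge coloring, a rainbow path with 3 edges. -/
open SimpleGraph

set_option maxHeartbeats 1600000 in
theorem main_aux {V : Type*} [Fintype V] (G : SimpleGraph V)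
    (h3 : ¬ ContainsCopy G (⊤ : SimpleGraph (Fin 3)))
    (H : SimpleGraph V) (hHG : H ≤ G) (hcard : Fintype.card V < H.edgeSet.ncard)
    (c : Sym2 V → ℕ) (hc : IsProperEdgeColoring H c) :
    HasRainbowCopy H c (SimpleGraph.pathGraph 4) := by
  classical
  by_contra hno
  -- triangle-free helper
  have tri : ∀ u v w : V, H.Adj u v → H.Adj v w → H.Adj u w → False := by
    intro u v w huv hvw huw
    apply h3
    refine ⟨⟨![u, v, w], ?_⟩, ?_⟩
    · intro i j hij
      fin_cases i <;> fin_cases j <;>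
        first
          | rfl
          | exact absurd hij huv.ne | exact absurd hij hvw.ne | exact absurd hij huw.ne
          | exact absurd hij huv.ne' | exact absurd hij hvw.ne' | exact absurd hij huw.ne'
    · intro i j hij
      fin_cases i <;> fin_cases j <;>
        first
          | exact absurd rfl hij.ne
          | exact hHG huv | exact hHG hvw | exact hHG huw
          | exact hHG huv.symm | exact hHG hvw.symm | exact hHG huw.symm
  -- no rainbow P3: end edges of any path of length 3 share a color
  have path_lemma : ∀ a b d e : V, H.Adj a b → H.Adj b d → H.Adj d e →
      a ≠ d → a ≠ e → b ≠ e → c s(a, b) = c s(d, e) := by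
    intro a b d e hab hbd hde had hae hbe
    by_contra hne
    have h12 : c s(a, b) ≠ c s(b, d) := by
      apply hc (H.mem_edgeSet.2 hab) (H.mem_edgeSet.2 hbd) ?_ ⟨b, by simp, by simp⟩
      intro h
      rcases Sym2.eq_iff.mp h with ⟨h1, _⟩ | ⟨h1, _⟩
      · exact hab.ne h1
      · exact had h1
    have h23 : c s(b, d) ≠ c s(d, e) := by
      apply hc (H.mem_edgeSet.2 hbd) (H.mem_edgeSet.2 hde) ?_ ⟨d, by simp, by simp⟩
      intro h
      rcases Sym2.eq_iff.mp h with ⟨h1, _⟩ | ⟨h1, _⟩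
      · exact hbd.ne h1
      · exact hbe h1
    have hba : c s(b, a) = c s(a, b) := by rw [Sym2.eq_swap]
    have hdb : c s(d, b) = c s(b, d) := by rw [Sym2.eq_swap]
    have hed : c s(e, d) = c s(d, e) := by rw [Sym2.eq_swap]
    apply hno
    refine ⟨⟨![a, b, d, e], ?_⟩, ?_, ?_⟩
    · intro i j hij
      fin_cases i <;> fin_cases j <;>
        first
          | rfl
          | exact absurd hij hab.ne | exact absurd hij hbd.ne | exact absurd hij hde.ne
          | exact absurd hij hab.ne' | exact absurd hij hbd.ne' | exact absurd hij hde.ne'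
          | exact absurd hij had | exact absurd hij had.symm
          | exact absurd hij hae | exact absurd hij hae.symm
          | exact absurd hij hbe | exact absurd hij hbe.symm
    · intro i j hij
      rw [SimpleGraph.pathGraph_adj] at hij
      fin_cases i <;> fin_cases j <;> simp_all <;>
        first
          | exact hab | exact hbd | exact hde
          | exact hab.symm | exact hbd.symm | exact hde.symm
    · intro i j i' j' hij hij' hnee
      rw [SimpleGraph.pathGraph_adj] at hij hij'
      fin_cases i <;> fin_cases j <;> fin_cases i' <;> fin_cases j' <;>
        first
          | (exfalso; revert hij; decide)
          | (exfalso; revert hij'; decide)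
          | (exfalso; exact hnee (by decide))
          | (simp only [Fin.isValue, Matrix.cons_val_zero, Matrix.cons_val_one,
              Matrix.head_cons, Matrix.cons_val_two, Matrix.tail_cons, Matrix.cons_val_three,
              Fin.mk_one, Fin.mk_zero, Matrix.cons_val_succ, Matrix.cons_val_fin_one]
             omega)
          | (dsimp only [DFunLike.coe]; simp; omega)
  -- key structural fact
  have key : ∀ v w : V, H.Adj v w → 3 ≤ H.degree v → H.degree w = 1 := by
    intro v w hvw hv
    have hw1 : 1 ≤ H.degree w := by
      rw [← SimpleGraph.card_neighborFinset_eq_degree]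
      exact Finset.card_pos.2 ⟨v, by simp [hvw.symm]⟩
    by_contra hne1
    have hw2 : 1 < (H.neighborFinset w).card := by
      rw [SimpleGraph.card_neighborFinset_eq_degree]; omega
    obtain ⟨x, hx, hxv⟩ := Finset.exists_mem_ne hw2 v
    rw [SimpleGraph.mem_neighborFinset] at hx
    have hvcard : 1 < ((H.neighborFinset v).erase w).card := by
      have := Finset.card_erase_of_mem (s := H.neighborFinset v) (a := w) (by simp [hvw])
      rw [SimpleGraph.card_neighborFinset_eq_degree] at this
      omega
    obtain ⟨u, hu, u', hu', huu'⟩ := Finset.one_lt_card.mp hvcard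
    rw [Finset.mem_erase, SimpleGraph.mem_neighborFinset] at hu hu'
    have hux : u ≠ x := fun h => tri v w x hvw hx (h ▸ hu.2)
    have hu'x : u' ≠ x := fun h => tri v w x hvw hx (h ▸ hu'.2)
    have e1 : c s(u, v) = c s(w, x) :=
      path_lemma u v w x hu.2.symm hvw hx hu.1 hux (Ne.symm hxv)
    have e2 : c s(u', v) = c s(w, x) :=
      path_lemma u' v w x hu'.2.symm hvw hx hu'.1 hu'x (Ne.symm hxv)
    apply hc (H.mem_edgeSet.2 hu.2.symm) (H.mem_edgeSet.2 hu'.2.symm)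
      ?_ ⟨v, by simp, by simp⟩ (e1.trans e2.symm)
    intro h
    rcases Sym2.eq_iff.mp h with ⟨h1, _⟩ | ⟨h1, h2⟩
    · exact huu' h1
    · exact hu'.2.ne h2
  -- counting
  set B : Finset V := Finset.univ.filter (fun v => 3 ≤ H.degree v) with hB
  set L : Finset V := B.biUnion (fun v => H.neighborFinset v) with hLdef
  have hL1 : ∀ z ∈ L, H.degree z = 1 := by
    intro z hz
    rw [hLdef, Finset.mem_biUnion] at hz
    obtain ⟨v, hv, hzv⟩ := hz
    rw [SimpleGraph.mem_neighborFinset] at hzv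
    rw [hB, Finset.mem_filter] at hv
    exact key v z hzv hv.2
  have hdisj : ∀ v ∈ B, ∀ w ∈ B, v ≠ w →
      Disjoint (H.neighborFinset v) (H.neighborFinset w) := by
    intro v hv w hw hvwne
    rw [Finset.disjoint_left]
    intro z hzv hzw
    rw [SimpleGraph.mem_neighborFinset] at hzv hzw
    rw [hB, Finset.mem_filter] at hv hw
    have hz1 : H.degree z = 1 := key v z hzv hv.2
    have h2 : 2 ≤ H.degree z := by
      rw [← SimpleGraph.card_neighborFinset_eq_degree]
      have hsub : ({v, w} : Finset V) ⊆ H.neighborFinset z := by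
        intro t ht
        rw [Finset.mem_insert, Finset.mem_singleton] at ht
        rcases ht with rfl | rfl <;>
          simp [SimpleGraph.mem_neighborFinset, hzv.symm, hzw.symm]
      calc 2 = ({v, w} : Finset V).card := (Finset.card_pair hvwne).symm
        _ ≤ _ := Finset.card_le_card hsub
    omega
  have cardL : L.card = ∑ v ∈ B, H.degree v := by
    rw [hLdef, Finset.card_biUnion hdisj]
    exact Finset.sum_congr rfl fun v _ => SimpleGraph.card_neighborFinset_eq_degree H v
  have hLsubBc : L ⊆ Bᶜ := by
    intro z hz
    rw [Finset.mem_compl, hB, Finset.mem_filter]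
    have := hL1 z hz
    push_neg
    intro _
    omega
  have hsum : ∑ v : V, H.degree v = 2 * H.edgeFinset.card :=
    SimpleGraph.sum_degrees_eq_twice_card_edges H
  have hsplit : ∑ v : V, H.degree v = (∑ v ∈ B, H.degree v) + ∑ v ∈ Bᶜ, H.degree v :=
    (Finset.sum_add_sum_compl B _).symm
  have hBclow : ∑ v ∈ Bᶜ, H.degree v ≤ 2 * Bᶜ.card - L.card := by
    have h1 : (∑ v ∈ Bᶜ \ L, H.degree v) + ∑ v ∈ L, H.degree v = ∑ v ∈ Bᶜ, H.degree v :=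
      Finset.sum_sdiff hLsubBc
    have h2 : ∑ v ∈ L, H.degree v = L.card := by
      rw [Finset.card_eq_sum_ones]
      exact Finset.sum_congr rfl hL1
    have h3 : ∑ v ∈ Bᶜ \ L, H.degree v ≤ 2 * (Bᶜ.card - L.card) := by
      calc ∑ v ∈ Bᶜ \ L, H.degree v ≤ ∑ _v ∈ Bᶜ \ L, 2 := by
            apply Finset.sum_le_sum
            intro v hv
            have hvB : v ∉ B := Finset.mem_compl.mp (Finset.mem_sdiff.mp hv).1
            rw [hB, Finset.mem_filter] at hvB
            push_neg at hvB
            have := hvB (Finset.mem_univ v)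
            omega
        _ = 2 * (Bᶜ \ L).card := by rw [Finset.sum_const, smul_eq_mul, mul_comm]
        _ = 2 * (Bᶜ.card - L.card) := by rw [Finset.card_sdiff_of_subset hLsubBc]
    have hLle : L.card ≤ Bᶜ.card := Finset.card_le_card hLsubBc
    omega
  have hEcard : H.edgeSet.ncard = H.edgeFinset.card := by
    rw [Set.ncard_eq_toFinset_card']
    congr 1
  have hfinal : H.edgeFinset.card ≤ Fintype.card V := by
    have hBcle : Bᶜ.card ≤ Fintype.card V := Finset.card_le_univ _
    have hLle : L.card ≤ Bᶜ.card := Finset.card_le_card hLsubBc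
    omega
  rw [hEcard] at hcard
  omega

/-- If `G` is triangle-free, then `ex*(G, P_3) ≤ |V(G)|`; that is,
every subgraph of `G` with more than `|V(G)|` edges contains, under every proper
edge coloring, a rainbow path with `3` edges. -/
theorem stmt15 {V : Type*} [Fintype V] (G : SimpleGraph V)
    (h3 : ¬ ContainsCopy G (⊤ : SimpleGraph (Fin 3))) :
    rainbowExtremalNumber G (SimpleGraph.pathGraph 4) ≤ Fintype.card V ∧
    (∀ H : SimpleGraph V, H ≤ G → Fintype.card V < H.edgeSet.ncard →
      ∀ c : Sym2 V → ℕ, IsProperEdgeColoring H c →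
        HasRainbowCopy H c (SimpleGraph.pathGraph 4)) := by
  classical
  refine ⟨?_, fun H hHG hlt c hc => main_aux G h3 H hHG hlt c hc⟩
  apply csSup_le'
  rintro m ⟨H, hHG, ⟨c, hc, hnr⟩, rfl⟩
  by_contra hlt
  push_neg at hlt
  exact hnr (main_aux G h3 H hHG hlt c hc)
end
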